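/- Assume condition (c3) holds and that the forms S_n pre-converge to S. Then condition (iii) implies condition (iv). -/

import Mathlib

open MeasureTheory Filter Topology

noncomputable section

namespace Mosco

variable {E : Type*} [MeasurableSpace E]

/-- The inner product of two real-valued functions with respect to a measure,
`⟨φ, ψ⟩ = ∫ φ ψ dμ`. -/
def ip (μ : Measure E) (φ ψ : E → ℝ) : ℝ := ∫ x, φ x * ψ x ∂μ

/-- The framework of Section 2.1: mutually singular probability measures `ν n`, `n : ℕ`
(`ν 0` playing the role of the limit measure `ν`), such that `L²(E, ν 0)` is separable,
together with disjoint sets `En n` carrying `ν n`, and a linear subset `F = 𝓕 ⊆ 𝓓`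
which is dense in `L²(E, ν 0)`. -/
structure Frame (E : Type*) [MeasurableSpace E] where
  ν : ℕ → Measure E
  prob : ∀ n, IsProbabilityMeasure (ν n)
  singular : ∀ m n, m ≠ n → (ν m).MutuallySingular (ν n)
  separableL2 : TopologicalSpace.SeparableSpace (Lp ℝ 2 (ν 0))
  En : ℕ → Set E
  measEn : ∀ n, MeasurableSet (En n)
  disjEn : ∀ m n, m ≠ n → Disjoint (En m) (En n)
  nullEn : ∀ n, ν n (En n)ᶜ = 0
  F : Set (E → ℝ)
  F_measurable : ∀ φ ∈ F, Measurable φ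
  F_memL2 : ∀ φ ∈ F, ∀ n, MemLp φ 2 (ν n)
  F_tendsto : ∀ φ ∈ F, Tendsto (fun n => ip (ν n) φ φ) atTop (𝓝 (ip (ν 0) φ φ))
  F_linear : ∀ φ ∈ F, ∀ ψ ∈ F, ∀ a b : ℝ, (fun x => a * φ x + b * ψ x) ∈ F
  F_dense : ∀ f : E → ℝ, Measurable f → MemLp f 2 (ν 0) → ∀ ε : ℝ, 0 < ε →
    ∃ φ ∈ F, ip (ν 0) (fun x => f x - φ x) (fun x => f x - φ x) < ε

/-- The set `𝓓`: everywhere defined measurable functions lying in every `L²(E, ν n)`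
whose `ν n`-norms converge to the `ν 0`-norm. -/
def Frame.D (fr : Frame E) : Set (E → ℝ) :=
  {φ | Measurable φ ∧ (∀ n, MemLp φ 2 (fr.ν n)) ∧
    Tendsto (fun n => ip (fr.ν n) φ φ) atTop (𝓝 (ip (fr.ν 0) φ φ))}

/-- The set `𝓒`: elements of `𝓓` satisfying conditions (c1) and (c2). -/
def Frame.C (fr : Frame E) : Set (E → ℝ) :=
  {φ | φ ∈ fr.D ∧ (∀ n, 1 ≤ n → ∃ g ∈ fr.F, φ =ᵐ[fr.ν n] g) ∧
    ∀ ψ ∈ fr.F, Tendsto (fun n => ip (fr.ν n) φ ψ) atTop (𝓝 (ip (fr.ν 0) φ ψ))}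

/-- The set `𝓥` of multipliers mapping `𝓓` into `𝓓` and `𝓕` into `𝓕`. -/
def Frame.V (fr : Frame E) : Set (E → ℝ) :=
  {ψ | Measurable ψ ∧ (∀ n, MemLp ψ 2 (fr.ν n)) ∧
    (∀ σ ∈ fr.D, (fun x => σ x * ψ x) ∈ fr.D) ∧
    (∀ τ ∈ fr.F, (fun x => τ x * ψ x) ∈ fr.F)}

/-- `w`-convergence of a sequence `φs` (with `φs n` regarded as an element of
`L²(E, ν n)`) to `φ ∈ L²(E, ν 0)`. -/
def Frame.WConv (fr : Frame E) (φs : ℕ → E → ℝ) (φ : E → ℝ) : Prop :=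
  ∀ ψ ∈ fr.C, Tendsto (fun n => ip (fr.ν n) (φs n) ψ) atTop (𝓝 (ip (fr.ν 0) φ ψ))

/-- `s`-convergence: `w`-convergence together with convergence of the norms. -/
def Frame.SConv (fr : Frame E) (φs : ℕ → E → ℝ) (φ : E → ℝ) : Prop :=
  fr.WConv φs φ ∧
  Tendsto (fun n => ip (fr.ν n) (φs n) (φs n)) atTop (𝓝 (ip (fr.ν 0) φ φ))

open Classical

/-- The `L²(μ)`-class of a function (zero if the function is not square-integrable). -/
def toL2 (μ : Measure E) (φ : E → ℝ) : Lp ℝ 2 μ :=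
  if h : MemLp φ 2 μ then h.toLp φ else 0

/-- A strongly continuous semigroup of bounded linear operators on `L²(E, μ)`. -/
structure Semigroup2 {E : Type*} [MeasurableSpace E] (μ : Measure E) where
  T : ℝ → Lp ℝ 2 μ →L[ℝ] Lp ℝ 2 μ
  T_zero : T 0 = ContinuousLinearMap.id ℝ (Lp ℝ 2 μ)
  T_add : ∀ s t : ℝ, 0 ≤ s → 0 ≤ t → T (s + t) = (T s).comp (T t)
  strongCont : ∀ f : Lp ℝ 2 μ, Tendsto (fun t => T t f) (𝓝[≥] (0:ℝ)) (𝓝 f)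

namespace Semigroup2

variable {μ : Measure E}

/-- The semigroup is a contraction semigroup. -/
def IsContraction (sg : Semigroup2 μ) : Prop := ∀ t : ℝ, 0 ≤ t → ‖sg.T t‖ ≤ 1

/-- The adjoint (dual) semigroup `T'`. -/
def dual (sg : Semigroup2 μ) (t : ℝ) : Lp ℝ 2 μ →L[ℝ] Lp ℝ 2 μ :=
  ContinuousLinearMap.adjoint (sg.T t)

/-- Membership in the domain `D(A)` of the generator. -/
def memDom (sg : Semigroup2 μ) (f : Lp ℝ 2 μ) : Prop :=
  ∃ g : Lp ℝ 2 μ, Tendsto (fun t : ℝ => t⁻¹ • (sg.T t f - f)) (𝓝[>] (0:ℝ)) (𝓝 g)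

/-- The generator `A` (zero off its domain). -/
def gen (sg : Semigroup2 μ) (f : Lp ℝ 2 μ) : Lp ℝ 2 μ :=
  if h : sg.memDom f then Exists.choose h else 0

/-- Membership in the domain `D(A')` of the adjoint generator. -/
def memDom' (sg : Semigroup2 μ) (f : Lp ℝ 2 μ) : Prop :=
  ∃ g : Lp ℝ 2 μ, Tendsto (fun t : ℝ => t⁻¹ • (sg.dual t f - f)) (𝓝[>] (0:ℝ)) (𝓝 g)

/-- The adjoint generator `A'` (zero off its domain). -/
def gen' (sg : Semigroup2 μ) (f : Lp ℝ 2 μ) : Lp ℝ 2 μ :=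
  if h : sg.memDom' f then Exists.choose h else 0

/-- The resolvent `G_β = (β - A)⁻¹ = ∫_0^∞ e^{-βt} T_t dt`. -/
def res (sg : Semigroup2 μ) (β : ℝ) (f : Lp ℝ 2 μ) : Lp ℝ 2 μ :=
  ∫ t in Set.Ioi (0:ℝ), Real.exp (-β * t) • sg.T t f

/-- The adjoint resolvent `G'_β`. -/
def res' (sg : Semigroup2 μ) (β : ℝ) (f : Lp ℝ 2 μ) : Lp ℝ 2 μ :=
  ∫ t in Set.Ioi (0:ℝ), Real.exp (-β * t) • sg.dual t f

/-- `u ∈ D(A) = D(S)`, at the level of functions. -/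
def memD (sg : Semigroup2 μ) (u : E → ℝ) : Prop := sg.memDom (toL2 μ u)

/-- `u ∈ D(A')`, at the level of functions. -/
def memD' (sg : Semigroup2 μ) (u : E → ℝ) : Prop := sg.memDom' (toL2 μ u)

/-- `A u`, at the level of functions. -/
def Af (sg : Semigroup2 μ) (u : E → ℝ) : E → ℝ := sg.gen (toL2 μ u)

/-- `A' u`, at the level of functions. -/
def Af' (sg : Semigroup2 μ) (u : E → ℝ) : E → ℝ := sg.gen' (toL2 μ u)

/-- `G_β u`, at the level of functions. -/
def Res (sg : Semigroup2 μ) (β : ℝ) (u : E → ℝ) : E → ℝ := sg.res β (toL2 μ u)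

/-- `G'_β u`, at the level of functions. -/
def Res' (sg : Semigroup2 μ) (β : ℝ) (u : E → ℝ) : E → ℝ := sg.res' β (toL2 μ u)

/-- `T_t u`, at the level of functions. -/
def Tf (sg : Semigroup2 μ) (t : ℝ) (u : E → ℝ) : E → ℝ := sg.T t (toL2 μ u)

/-- `T'_t u`, at the level of functions. -/
def Tf' (sg : Semigroup2 μ) (t : ℝ) (u : E → ℝ) : E → ℝ := sg.dual t (toL2 μ u)

/-- The bilinear form `S(u, v) = ⟨-A u, v⟩` associated with the semigroup. -/
def S (sg : Semigroup2 μ) (u v : E → ℝ) : ℝ := ip μ (fun x => -(sg.Af u x)) v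

/-- `S_β(u, v) = β ⟨u, v⟩ + S(u, v)`. -/
def Sb (sg : Semigroup2 μ) (β : ℝ) (u v : E → ℝ) : ℝ := β * ip μ u v + sg.S u v

end Semigroup2

/-- Definition 2.4 (i) and (ii): the forms `S n` pre-converge to `S 0`.
Here `sg n` is the semigroup on `L²(E, ν n)` and `sg 0` the limiting one. -/
def PreConv (fr : Frame E) (sg : ∀ n, Semigroup2 (fr.ν n)) : Prop :=
  (∀ φ : E → ℝ, Measurable φ → MemLp φ 2 (fr.ν 0) →
    ∀ nk : ℕ → ℕ, StrictMono nk →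
    ∀ φk : ℕ → E → ℝ, (∀ k, φk k ∈ fr.C ∧ (sg (nk k)).memD (φk k)) →
    (∀ ψ ∈ fr.C, Tendsto (fun k => ip (fr.ν (nk k)) (φk k) ψ)
      atTop (𝓝 (ip (fr.ν 0) φ ψ))) →
    (∃ M : ℝ, ∀ k, ip (fr.ν (nk k)) ((sg (nk k)).Af (φk k)) ((sg (nk k)).Af (φk k)) ≤ M) →
    (sg 0).memD φ ∧
      (sg 0).S φ φ ≤ liminf (fun k => (sg (nk k)).S (φk k) (φk k)) atTop) ∧
  (∀ ψ : E → ℝ, Measurable ψ → MemLp ψ 2 (fr.ν 0) → (sg 0).memD ψ →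
    ∃ ψs : ℕ → E → ℝ, (∀ n, ψs n ∈ fr.C ∧ (sg n).memD (ψs n)) ∧
      fr.SConv ψs ψ ∧
      (∃ M : ℝ, ∀ n, ip (fr.ν n) ((sg n).Af (ψs n)) ((sg n).Af (ψs n)) ≤ M) ∧
      limsup (fun n => (sg n).S (ψs n) (ψs n)) atTop ≤ (sg 0).S ψ ψ)

/-- Condition (iii) of Definition 2.4. -/
def CondIII (fr : Frame E) (sg : ∀ n, Semigroup2 (fr.ν n)) : Prop :=
  ∀ β : ℝ, 0 < β →
  ∀ u : E → ℝ, Measurable u → MemLp u 2 (fr.ν 0) → (sg 0).memD u →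
  ∀ us : ℕ → E → ℝ,
    (∀ n, us n ∈ fr.C ∧ (sg n).memD (us n) ∧ ∃ c ∈ fr.C, (sg n).Af (us n) =ᵐ[fr.ν n] c) →
    (∃ w : E → ℝ, Measurable w ∧ MemLp w 2 (fr.ν 0) ∧ fr.WConv us w) →
    (∃ M : ℝ, ∀ n, ip (fr.ν n) ((sg n).Af (us n)) ((sg n).Af (us n)) ≤ M) →
    (∀ ψ ∈ fr.C, ∀ ψs : ℕ → E → ℝ, (∀ n, ψs n ∈ fr.C) → fr.SConv ψs ψ →
      Tendsto (fun n => (sg n).Sb β (us n) (ψs n)) atTop (𝓝 ((sg 0).Sb β u ψ))) →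
    ∀ ψ : E → ℝ, Measurable ψ → MemLp ψ 2 (fr.ν 0) → (sg 0).memD ψ →
    ∀ ψs : ℕ → E → ℝ, (∀ n, ψs n ∈ fr.C ∧ (sg n).memD (ψs n)) → fr.SConv ψs ψ →
      (∃ M : ℝ, ∀ n, ip (fr.ν n) ((sg n).Af (ψs n)) ((sg n).Af (ψs n)) ≤ M) →
      limsup (fun n => (sg n).S (ψs n) (ψs n)) atTop ≤ (sg 0).S ψ ψ →
      Tendsto (fun n => (sg n).Sb β (ψs n) (us n)) atTop (𝓝 ((sg 0).Sb β ψ u))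

/-- Condition (iv) of Lemma 2.6. -/
def CondIV (fr : Frame E) (sg : ∀ n, Semigroup2 (fr.ν n)) : Prop :=
  ∀ β : ℝ, 0 < β →
  ∀ u : E → ℝ, Measurable u → MemLp u 2 (fr.ν 0) → (sg 0).memD u →
  ∀ us : ℕ → E → ℝ,
    (∀ n, us n ∈ fr.C ∧ (sg n).memD (us n) ∧ ∃ c ∈ fr.C, (sg n).Af (us n) =ᵐ[fr.ν n] c) →
    (∃ w : E → ℝ, Measurable w ∧ MemLp w 2 (fr.ν 0) ∧ fr.WConv us w) →
    (∃ M : ℝ, ∀ n, ip (fr.ν n) ((sg n).Af (us n)) ((sg n).Af (us n)) ≤ M) →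
    fr.WConv (fun n x => β * us n x - (sg n).Af (us n) x)
      (fun x => β * u x - (sg 0).Af u x) →
    fr.WConv us u

/-- The forms converge: pre-convergence together with condition (iii). -/
def Conv (fr : Frame E) (sg : ∀ n, Semigroup2 (fr.ν n)) : Prop :=
  PreConv fr sg ∧ CondIII fr sg

/-- Condition (c3): resolvents and adjoint resolvents of elements of `𝓒`
coincide a.e. with elements of `𝓒`. -/
def CondC3 (fr : Frame E) (sg : ∀ n, Semigroup2 (fr.ν n)) : Prop :=
  ∀ g ∈ fr.C, ∀ β : ℝ, 0 < β →
    (∃ u ∈ fr.C, (sg 0).Res β g =ᵐ[fr.ν 0] u) ∧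
    (∀ n, 1 ≤ n → ∃ u ∈ fr.C, (sg n).Res β g =ᵐ[fr.ν n] u) ∧
    (∃ u ∈ fr.C, (sg 0).Res' β g =ᵐ[fr.ν 0] u) ∧
    (∀ n, 1 ≤ n → ∃ u ∈ fr.C, (sg n).Res' β g =ᵐ[fr.ν n] u)

/-- Condition (c4): `D(S) ⊆ 𝓒` and `A(D(S)) ⊆ 𝓒`, up to `ν 0`-a.e. equality. -/
def CondC4 (fr : Frame E) (sg : ∀ n, Semigroup2 (fr.ν n)) : Prop :=
  ∀ φ : E → ℝ, Measurable φ → MemLp φ 2 (fr.ν 0) → (sg 0).memD φ →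
    (∃ u ∈ fr.C, φ =ᵐ[fr.ν 0] u) ∧ (∃ u ∈ fr.C, (sg 0).Af φ =ᵐ[fr.ν 0] u)

/-- Condition (c5): semigroups and adjoint semigroups applied to elements of `𝓒`
coincide a.e. with elements of `𝓒`. -/
def CondC5 (fr : Frame E) (sg : ∀ n, Semigroup2 (fr.ν n)) : Prop :=
  ∀ g ∈ fr.C, ∀ t : ℝ, 0 ≤ t →
    (∃ u ∈ fr.C, (sg 0).Tf t g =ᵐ[fr.ν 0] u) ∧
    (∀ n, 1 ≤ n → ∃ u ∈ fr.C, (sg n).Tf t g =ᵐ[fr.ν n] u) ∧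
    (∃ u ∈ fr.C, (sg 0).Tf' t g =ᵐ[fr.ν 0] u) ∧
    (∀ n, 1 ≤ n → ∃ u ∈ fr.C, (sg n).Tf' t g =ᵐ[fr.ν n] u)


/-! ### Auxiliary lemmas -/

section Aux

variable {μ : Measure E}

notation "⟪" x ", " y "⟫" => @inner ℝ _ _ x y

lemma toL2_eq {f : E → ℝ} (hf : MemLp f 2 μ) : toL2 μ f = hf.toLp f := dif_pos hf

lemma toL2_coeFn (f : Lp ℝ 2 μ) : toL2 μ (⇑f) = f := by
  rw [toL2_eq (Lp.memLp f)]
  ext1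
  exact (Lp.memLp f).coeFn_toLp

lemma memℒp_coeFn (f : Lp ℝ 2 μ) : MemLp (⇑f) 2 μ := Lp.memLp f

lemma ip_eq_inner {f g : E → ℝ} (hf : MemLp f 2 μ) (hg : MemLp g 2 μ) :
    ip μ f g = ⟪toL2 μ f, toL2 μ g⟫ := by
  rw [toL2_eq hf, toL2_eq hg, MeasureTheory.L2.inner_def]
  refine (integral_congr_ae ?_).symm
  filter_upwards [hf.coeFn_toLp, hg.coeFn_toLp] with x h1 h2
  simp [h1, h2, RCLike.inner_apply, mul_comm]

lemma toL2_sub {f g : E → ℝ} (hf : MemLp f 2 μ) (hg : MemLp g 2 μ) :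
    toL2 μ (fun x => f x - g x) = toL2 μ f - toL2 μ g := by
  rw [toL2_eq hf, toL2_eq hg, toL2_eq ((hf.sub hg).ae_eq (by rfl))]
  exact (MemLp.toLp_congr _ _ (by rfl)).trans (MemLp.toLp_sub hf hg)

lemma toL2_smul {f : E → ℝ} (hf : MemLp f 2 μ) (c : ℝ) :
    toL2 μ (fun x => c * f x) = c • toL2 μ f := by
  rw [toL2_eq hf, toL2_eq ((hf.const_smul c).ae_eq (by rfl))]
  exact (MemLp.toLp_congr _ _ (by rfl)).trans (MemLp.toLp_const_smul c hf)

lemma toL2_congr {f g : E → ℝ} (hf : MemLp f 2 μ) (h : f =ᵐ[μ] g) :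
    toL2 μ f = toL2 μ g := by
  rw [toL2_eq hf, toL2_eq (hf.ae_eq h)]
  exact MemLp.toLp_congr _ _ h

lemma ip_self_nonneg {f : E → ℝ} (hf : MemLp f 2 μ) : 0 ≤ ip μ f f := by
  rw [ip_eq_inner hf hf]; exact real_inner_self_nonneg

lemma ip_self_eq_norm_sq {f : E → ℝ} (hf : MemLp f 2 μ) :
    ip μ f f = ‖toL2 μ f‖ ^ 2 := by
  rw [ip_eq_inner hf hf, real_inner_self_eq_norm_sq]

end Aux

namespace Semigroup2

variable {μ : Measure E} (sg : Semigroup2 μ)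

lemma tendsto_gen {f : Lp ℝ 2 μ} (h : sg.memDom f) :
    Tendsto (fun t : ℝ => t⁻¹ • (sg.T t f - f)) (𝓝[>] (0:ℝ)) (𝓝 (sg.gen f)) := by
  rw [gen, dif_pos h]; exact h.choose_spec

lemma gen_eq_of_tendsto {f g : Lp ℝ 2 μ}
    (h : Tendsto (fun t : ℝ => t⁻¹ • (sg.T t f - f)) (𝓝[>] (0:ℝ)) (𝓝 g)) :
    sg.gen f = g :=
  tendsto_nhds_unique (sg.tendsto_gen ⟨g, h⟩) h

lemma memDom_sub {f g : Lp ℝ 2 μ} (hf : sg.memDom f) (hg : sg.memDom g) :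
    sg.memDom (f - g) := by
  refine ⟨sg.gen f - sg.gen g, ?_⟩
  have := (sg.tendsto_gen hf).sub (sg.tendsto_gen hg)
  refine this.congr (fun t => ?_)
  rw [← smul_sub]
  congr 1
  rw [map_sub]
  abel

lemma gen_sub {f g : Lp ℝ 2 μ} (hf : sg.memDom f) (hg : sg.memDom g) :
    sg.gen (f - g) = sg.gen f - sg.gen g := by
  refine sg.gen_eq_of_tendsto ?_
  have := (sg.tendsto_gen hf).sub (sg.tendsto_gen hg)
  refine this.congr (fun t => ?_)
  rw [← smul_sub]
  congr 1
  rw [map_sub]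
  abel

lemma norm_T_le (hc : sg.IsContraction) {t : ℝ} (ht : 0 ≤ t) (f : Lp ℝ 2 μ) :
    ‖sg.T t f‖ ≤ ‖f‖ := by
  calc ‖sg.T t f‖ ≤ ‖sg.T t‖ * ‖f‖ := (sg.T t).le_opNorm f
  _ ≤ 1 * ‖f‖ := by
      have := hc t ht
      have h0 : (0:ℝ) ≤ ‖f‖ := norm_nonneg f
      nlinarith
  _ = ‖f‖ := one_mul _

lemma inner_gen_self_nonpos (hc : sg.IsContraction) {f : Lp ℝ 2 μ} (hf : sg.memDom f) :
    ⟪sg.gen f, f⟫ ≤ 0 := by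
  have hlim : Tendsto (fun t : ℝ => ⟪t⁻¹ • (sg.T t f - f), f⟫) (𝓝[>] (0:ℝ))
      (𝓝 (⟪sg.gen f, f⟫)) := by
    exact Tendsto.inner (sg.tendsto_gen hf) tendsto_const_nhds
  refine le_of_tendsto hlim ?_
  filter_upwards [self_mem_nhdsWithin] with t (ht : 0 < t)
  rw [real_inner_smul_left, inner_sub_left]
  have h1 : ⟪sg.T t f, f⟫ ≤ ‖f‖ * ‖f‖ := by
    calc ⟪sg.T t f, f⟫ ≤ ‖sg.T t f‖ * ‖f‖ := real_inner_le_norm _ _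
    _ ≤ ‖f‖ * ‖f‖ := by
        have := sg.norm_T_le hc ht.le f
        have h0 : (0:ℝ) ≤ ‖f‖ := norm_nonneg f
        nlinarith
  have h2 : ⟪f, f⟫ = ‖f‖ * ‖f‖ := real_inner_self_eq_norm_mul_norm f
  have h3 : (0:ℝ) ≤ t⁻¹ := (inv_pos.2 ht).le
  nlinarith

end Semigroup2


namespace Semigroup2

variable {μ : Measure E} (sg : Semigroup2 μ)

lemma continuousOn_T (hc : sg.IsContraction) (f : Lp ℝ 2 μ) :
    ContinuousOn (fun t => sg.T t f) (Set.Ici (0:ℝ)) := by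
  intro s₀ hs₀
  rw [Metric.continuousWithinAt_iff]
  intro ε hε
  obtain ⟨δ, hδ, hδ'⟩ := Metric.tendsto_nhdsWithin_nhds.1 (sg.strongCont f) ε hε
  refine ⟨δ, hδ, fun s hs hdist => ?_⟩
  have hs' : (0:ℝ) ≤ s := hs
  have hs₀' : (0:ℝ) ≤ s₀ := hs₀
  have habs : |s - s₀| < δ := by rwa [Real.dist_eq] at hdist
  rcases le_total s₀ s with h | h
  · have key : sg.T s f = sg.T s₀ (sg.T (s - s₀) f) := by
      have h2 := sg.T_add s₀ (s - s₀) hs₀' (by linarith)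
      rw [show s₀ + (s - s₀) = s by ring] at h2
      rw [h2]; rfl
    have hmem : s - s₀ ∈ Set.Ici (0:ℝ) := by simp only [Set.mem_Ici]; linarith
    have hd : dist (sg.T (s - s₀) f) f < ε := by
      refine hδ' hmem ?_
      rw [Real.dist_eq, sub_zero, abs_of_nonneg (by linarith : (0:ℝ) ≤ s - s₀)]
      calc s - s₀ ≤ |s - s₀| := le_abs_self _
      _ < δ := habs
    calc dist (sg.T s f) (sg.T s₀ f) = ‖sg.T s₀ (sg.T (s - s₀) f) - sg.T s₀ f‖ := by
          rw [key, dist_eq_norm]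
    _ = ‖sg.T s₀ (sg.T (s - s₀) f - f)‖ := by rw [map_sub]
    _ ≤ ‖sg.T (s - s₀) f - f‖ := sg.norm_T_le hc hs₀' _
    _ = dist (sg.T (s - s₀) f) f := (dist_eq_norm _ _).symm
    _ < ε := hd
  · have key : sg.T s₀ f = sg.T s (sg.T (s₀ - s) f) := by
      have h2 := sg.T_add s (s₀ - s) hs' (by linarith)
      rw [show s + (s₀ - s) = s₀ by ring] at h2
      rw [h2]; rfl
    have hmem : s₀ - s ∈ Set.Ici (0:ℝ) := by simp only [Set.mem_Ici]; linarith
    have hd : dist (sg.T (s₀ - s) f) f < ε := by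
      refine hδ' hmem ?_
      rw [Real.dist_eq, sub_zero, abs_of_nonneg (by linarith : (0:ℝ) ≤ s₀ - s)]
      calc s₀ - s ≤ |s₀ - s| := le_abs_self _
      _ = |s - s₀| := abs_sub_comm _ _
      _ < δ := habs
    calc dist (sg.T s f) (sg.T s₀ f) = ‖sg.T s f - sg.T s (sg.T (s₀ - s) f)‖ := by
          rw [key, dist_eq_norm]
    _ = ‖sg.T s (f - sg.T (s₀ - s) f)‖ := by rw [map_sub]
    _ ≤ ‖f - sg.T (s₀ - s) f‖ := sg.norm_T_le hc hs' _
    _ = dist (sg.T (s₀ - s) f) f := by rw [dist_eq_norm, norm_sub_rev]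
    _ < ε := hd

lemma integrand_aesm (hc : sg.IsContraction) (β : ℝ) (f : Lp ℝ 2 μ) :
    AEStronglyMeasurable (fun t => Real.exp (-β*t) • sg.T t f)
      (volume.restrict (Set.Ioi (0:ℝ))) := by
  refine AEStronglyMeasurable.smul (f := fun t : ℝ => Real.exp (-β*t)) (g := fun t => sg.T t f) ?_ ?_
  · exact (Real.continuous_exp.comp (continuous_const.mul continuous_id)).aestronglyMeasurable
  · exact ((sg.continuousOn_T hc f).mono Set.Ioi_subset_Ici_self).aestronglyMeasurable
      measurableSet_Ioi

lemma integrableOn_res (hc : sg.IsContraction) {β : ℝ} (hβ : 0 < β) (f : Lp ℝ 2 μ) :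
    IntegrableOn (fun t => Real.exp (-β*t) • sg.T t f) (Set.Ioi (0:ℝ)) := by
  refine Integrable.mono' (((exp_neg_integrableOn_Ioi 0 hβ).const_mul ‖f‖))
    (sg.integrand_aesm hc β f) ?_
  refine (ae_restrict_iff' measurableSet_Ioi).2 (Filter.Eventually.of_forall fun t ht => ?_)
  have ht' : (0:ℝ) ≤ t := le_of_lt ht
  rw [norm_smul, Real.norm_eq_abs, abs_of_pos (Real.exp_pos _)]
  calc Real.exp (-β*t) * ‖sg.T t f‖ ≤ Real.exp (-β*t) * ‖f‖ := by
        exact mul_le_mul_of_nonneg_left (sg.norm_T_le hc ht' f) (Real.exp_pos _).le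
  _ = ‖f‖ * Real.exp (-β*t) := mul_comm _ _

lemma norm_res_le (hc : sg.IsContraction) {β : ℝ} (hβ : 0 < β) (f : Lp ℝ 2 μ) :
    ‖sg.res β f‖ ≤ (∫ t in Set.Ioi (0:ℝ), Real.exp (-β*t)) * ‖f‖ := by
  rw [res]
  refine (norm_integral_le_integral_norm _).trans ?_
  rw [← MeasureTheory.integral_mul_const]
  refine integral_mono_of_nonneg (Filter.Eventually.of_forall fun t => norm_nonneg _)
    ((exp_neg_integrableOn_Ioi 0 hβ).mul_const ‖f‖) ?_
  refine (ae_restrict_iff' measurableSet_Ioi).2 (Filter.Eventually.of_forall fun t ht => ?_)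
  have ht' : (0:ℝ) ≤ t := le_of_lt ht
  show ‖Real.exp (-β*t) • sg.T t f‖ ≤ Real.exp (-β*t) * ‖f‖
  rw [norm_smul, Real.norm_eq_abs, abs_of_pos (Real.exp_pos _)]
  exact mul_le_mul_of_nonneg_left (sg.norm_T_le hc ht' f) (Real.exp_pos _).le

lemma res_sub (hc : sg.IsContraction) {β : ℝ} (hβ : 0 < β) (f g : Lp ℝ 2 μ) :
    sg.res β (f - g) = sg.res β f - sg.res β g := by
  rw [res, res, res, ← integral_sub (sg.integrableOn_res hc hβ f) (sg.integrableOn_res hc hβ g)]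
  refine setIntegral_congr_fun measurableSet_Ioi (fun t _ => ?_)
  rw [map_sub, smul_sub]

lemma res_smul (hc : sg.IsContraction) {β : ℝ} (hβ : 0 < β) (c : ℝ) (f : Lp ℝ 2 μ) :
    sg.res β (c • f) = c • sg.res β f := by
  rw [res, res, ← integral_smul]
  refine setIntegral_congr_fun measurableSet_Ioi (fun t _ => ?_)
  rw [ContinuousLinearMap.map_smul, smul_comm]

lemma res_key (hc : sg.IsContraction) {β : ℝ} (hβ : 0 < β) (f : Lp ℝ 2 μ) {h : ℝ} (hh : 0 < h) :
    (∫ t in Set.Ioi (0:ℝ), Real.exp (-β*t) • sg.T (t+h) f) =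
      Real.exp (β*h) • (sg.res β f - ∫ t in Set.Ioc (0:ℝ) h, Real.exp (-β*t) • sg.T t f) := by
  have hint := sg.integrableOn_res hc hβ f
  have hd : Disjoint (Set.Ioc (0:ℝ) h) (Set.Ioi h) := by
    rw [Set.disjoint_left]; intro x hx hx'
    exact absurd hx.2 (not_le.2 hx')
  have split : sg.res β f = (∫ t in Set.Ioc (0:ℝ) h, Real.exp (-β*t) • sg.T t f)
      + ∫ t in Set.Ioi h, Real.exp (-β*t) • sg.T t f := by
    rw [res, ← setIntegral_union hd measurableSet_Ioi
      (hint.mono_set Set.Ioc_subset_Ioi_self) (hint.mono_set (Set.Ioi_subset_Ioi hh.le)),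
      Set.Ioc_union_Ioi_eq_Ioi hh.le]
  have shift : (∫ t in Set.Ioi h, Real.exp (-β*t) • sg.T t f)
      = ∫ t in Set.Ioi (0:ℝ), Real.exp (-β*(t+h)) • sg.T (t+h) f := by
    have hpre : (fun x : ℝ => x + h) ⁻¹' Set.Ioi h = Set.Ioi (0:ℝ) := by
      ext x
      simp only [Set.mem_preimage, Set.mem_Ioi, lt_add_iff_pos_left]
    rw [← MeasurePreserving.setIntegral_preimage_emb (measurePreserving_add_right volume h)
      (measurableEmbedding_addRight h) (fun t => Real.exp (-β*t) • sg.T t f) (Set.Ioi h), hpre]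
  have factor : (∫ t in Set.Ioi (0:ℝ), Real.exp (-β*(t+h)) • sg.T (t+h) f)
      = Real.exp (-β*h) • ∫ t in Set.Ioi (0:ℝ), Real.exp (-β*t) • sg.T (t+h) f := by
    rw [← integral_smul]
    refine setIntegral_congr_fun measurableSet_Ioi (fun t _ => ?_)
    rw [smul_smul, ← Real.exp_add]
    congr 2
    ring
  have lhs_eq : (∫ t in Set.Ioi h, Real.exp (-β*t) • sg.T t f)
      = Real.exp (-β*h) • ∫ t in Set.Ioi (0:ℝ), Real.exp (-β*t) • sg.T (t+h) f := by
    rw [shift, factor]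
  have : (∫ t in Set.Ioi (0:ℝ), Real.exp (-β*t) • sg.T (t+h) f)
      = Real.exp (β*h) • ∫ t in Set.Ioi h, Real.exp (-β*t) • sg.T t f := by
    rw [lhs_eq, smul_smul, ← Real.exp_add, show β*h + -β*h = 0 by ring, Real.exp_zero, one_smul]
  rw [this]
  congr 1
  have := split
  rw [this]
  abel

lemma T_res (hc : sg.IsContraction) {β : ℝ} (hβ : 0 < β) (f : Lp ℝ 2 μ) {h : ℝ} (hh : 0 < h) :
    sg.T h (sg.res β f) =
      Real.exp (β*h) • (sg.res β f - ∫ t in Set.Ioc (0:ℝ) h, Real.exp (-β*t) • sg.T t f) := by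
  rw [← sg.res_key hc hβ f hh, res,
    ← ContinuousLinearMap.integral_comp_comm (sg.T h) (sg.integrableOn_res hc hβ f)]
  refine setIntegral_congr_fun measurableSet_Ioi (fun t ht => ?_)
  rw [ContinuousLinearMap.map_smul]
  congr 1
  have h2 := sg.T_add h t hh.le (le_of_lt ht)
  rw [show h + t = t + h by ring] at h2
  rw [h2]; rfl

lemma res_T (hc : sg.IsContraction) {β : ℝ} (hβ : 0 < β) (f : Lp ℝ 2 μ) {h : ℝ} (hh : 0 < h) :
    sg.res β (sg.T h f) =
      Real.exp (β*h) • (sg.res β f - ∫ t in Set.Ioc (0:ℝ) h, Real.exp (-β*t) • sg.T t f) := by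
  rw [← sg.res_key hc hβ f hh, res]
  refine setIntegral_congr_fun measurableSet_Ioi (fun t ht => ?_)
  congr 1
  have h2 := sg.T_add t h (le_of_lt ht) hh.le
  rw [h2]; rfl

lemma tendsto_exp_one {β : ℝ} : Tendsto (fun h : ℝ => Real.exp (β*h)) (𝓝[>] (0:ℝ)) (𝓝 1) := by
  have : Tendsto (fun h : ℝ => Real.exp (β*h)) (𝓝 (0:ℝ)) (𝓝 (Real.exp (β*0))) :=
    (Real.continuous_exp.comp (continuous_const.mul continuous_id)).tendsto 0
  rw [show β*(0:ℝ) = 0 by ring, Real.exp_zero] at this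
  exact this.mono_left nhdsWithin_le_nhds

lemma tendsto_slope_exp {β : ℝ} :
    Tendsto (fun h : ℝ => h⁻¹ * (Real.exp (β*h) - 1)) (𝓝[>] (0:ℝ)) (𝓝 β) := by
  have H : HasDerivAt (fun h : ℝ => Real.exp (β*h)) β 0 := by
    have h1 : HasDerivAt (fun h : ℝ => β*h) β 0 := by
      simpa using (hasDerivAt_id (0:ℝ)).const_mul β
    have h2 := h1.exp
    rw [mul_zero, Real.exp_zero, one_mul] at h2
    exact h2
  have := hasDerivAt_iff_tendsto_slope.1 H
  have h2 := this.mono_left (nhdsWithin_mono 0 (fun x (hx : x ∈ Set.Ioi (0:ℝ)) => ne_of_gt hx))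
  refine h2.congr (fun h => ?_)
  rw [slope_def_field]
  simp only [mul_zero, Real.exp_zero, sub_zero]
  rw [div_eq_inv_mul]

lemma tendsto_avg (hc : sg.IsContraction) {β : ℝ} (hβ : 0 < β) (f : Lp ℝ 2 μ) :
    Tendsto (fun h : ℝ => h⁻¹ • ∫ t in Set.Ioc (0:ℝ) h, Real.exp (-β*t) • sg.T t f)
      (𝓝[>] (0:ℝ)) (𝓝 f) := by
  have hg : Tendsto (fun t : ℝ => Real.exp (-β*t) • sg.T t f) (𝓝[≥] (0:ℝ)) (𝓝 f) := by
    have h1 : Tendsto (fun t : ℝ => Real.exp (-β*t)) (𝓝[≥] (0:ℝ)) (𝓝 1) := by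
      have : Tendsto (fun t : ℝ => Real.exp (-β*t)) (𝓝 (0:ℝ)) (𝓝 (Real.exp (-β*0))) :=
        (Real.continuous_exp.comp (continuous_const.mul continuous_id)).tendsto 0
      rw [show -β*(0:ℝ) = 0 by ring, Real.exp_zero] at this
      exact this.mono_left nhdsWithin_le_nhds
    have := h1.smul (sg.strongCont f)
    rwa [one_smul] at this
  rw [Metric.tendsto_nhdsWithin_nhds]
  intro ε hε
  obtain ⟨δ, hδ, hδ'⟩ := Metric.tendsto_nhdsWithin_nhds.1 hg (ε/2) (by linarith)
  refine ⟨δ, hδ, fun {h} hh hdist => ?_⟩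
  have hh' : 0 < h := hh
  have hhδ : h < δ := by
    rw [Real.dist_eq, sub_zero, abs_of_pos hh'] at hdist; exact hdist
  have hbound : ∀ t ∈ Set.Ioc (0:ℝ) h, ‖Real.exp (-β*t) • sg.T t f - f‖ ≤ ε/2 := by
    intro t ht
    have := hδ' (show t ∈ Set.Ici (0:ℝ) from le_of_lt ht.1)
      (by rw [Real.dist_eq, sub_zero, abs_of_pos ht.1]; linarith [ht.2])
    rw [dist_eq_norm] at this
    exact this.le
  have hIoc : IntegrableOn (fun t : ℝ => Real.exp (-β*t) • sg.T t f) (Set.Ioc (0:ℝ) h) :=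
    (sg.integrableOn_res hc hβ f).mono_set Set.Ioc_subset_Ioi_self
  have hμIoc : volume (Set.Ioc (0:ℝ) h) < ⊤ := by
    rw [Real.volume_Ioc]; exact ENNReal.ofReal_lt_top
  have hconst : (∫ _ in Set.Ioc (0:ℝ) h, f ∂volume) = h • f := by
    rw [setIntegral_const, Real.volume_real_Ioc_of_le hh'.le, sub_zero]
  have hkey : (∫ t in Set.Ioc (0:ℝ) h, Real.exp (-β*t) • sg.T t f) - h • f
      = ∫ t in Set.Ioc (0:ℝ) h, (Real.exp (-β*t) • sg.T t f - f) := by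
    rw [integral_sub hIoc (integrableOn_const hμIoc.ne), hconst]
  have hnorm : ‖(∫ t in Set.Ioc (0:ℝ) h, Real.exp (-β*t) • sg.T t f) - h • f‖ ≤ ε/2 * h := by
    rw [hkey]
    have := norm_setIntegral_le_of_norm_le_const (μ := volume)
      (f := fun t : ℝ => Real.exp (-β*t) • sg.T t f - f) (C := ε/2) hμIoc hbound
    rw [Real.volume_real_Ioc_of_le hh'.le, sub_zero] at this
    exact this
  rw [dist_eq_norm]
  have : h⁻¹ • (∫ t in Set.Ioc (0:ℝ) h, Real.exp (-β*t) • sg.T t f) - f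
      = h⁻¹ • ((∫ t in Set.Ioc (0:ℝ) h, Real.exp (-β*t) • sg.T t f) - h • f) := by
    rw [smul_sub, smul_smul, inv_mul_cancel₀ (ne_of_gt hh'), one_smul]
  rw [this, norm_smul, Real.norm_eq_abs, abs_of_pos (inv_pos.2 hh')]
  calc h⁻¹ * ‖(∫ t in Set.Ioc (0:ℝ) h, Real.exp (-β*t) • sg.T t f) - h • f‖
      ≤ h⁻¹ * (ε/2 * h) := mul_le_mul_of_nonneg_left hnorm (inv_pos.2 hh').le
  _ = ε/2 := by field_simp
  _ < ε := by linarith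

lemma diff_quot_eq (hc : sg.IsContraction) {β : ℝ} (hβ : 0 < β) (f : Lp ℝ 2 μ) {h : ℝ}
    (hh : 0 < h) :
    Real.exp (β*h) • (sg.res β f - ∫ t in Set.Ioc (0:ℝ) h, Real.exp (-β*t) • sg.T t f)
        - sg.res β f
      = (Real.exp (β*h) - 1) • sg.res β f
        - Real.exp (β*h) • ∫ t in Set.Ioc (0:ℝ) h, Real.exp (-β*t) • sg.T t f := by
  rw [smul_sub, sub_smul, one_smul]
  abel

lemma tendsto_diff_quot (hc : sg.IsContraction) {β : ℝ} (hβ : 0 < β) (f : Lp ℝ 2 μ)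
    {X : ℝ → Lp ℝ 2 μ}
    (hX : ∀ h : ℝ, 0 < h → X h =
      Real.exp (β*h) • (sg.res β f - ∫ t in Set.Ioc (0:ℝ) h, Real.exp (-β*t) • sg.T t f)
        - sg.res β f) :
    Tendsto (fun h : ℝ => h⁻¹ • X h) (𝓝[>] (0:ℝ)) (𝓝 (β • sg.res β f - f)) := by
  have e1 : ∀ᶠ h in 𝓝[>] (0:ℝ), h⁻¹ • X h
      = (h⁻¹ * (Real.exp (β*h) - 1)) • sg.res β f
        - Real.exp (β*h) • (h⁻¹ • ∫ t in Set.Ioc (0:ℝ) h, Real.exp (-β*t) • sg.T t f) := by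
    filter_upwards [self_mem_nhdsWithin] with h (hh : 0 < h)
    rw [hX h hh, sg.diff_quot_eq hc hβ f hh, smul_sub, smul_smul, smul_comm]
  have t1 : Tendsto (fun h : ℝ => (h⁻¹ * (Real.exp (β*h) - 1)) • sg.res β f)
      (𝓝[>] (0:ℝ)) (𝓝 (β • sg.res β f)) := tendsto_slope_exp.smul_const _
  have t2 : Tendsto (fun h : ℝ =>
      Real.exp (β*h) • (h⁻¹ • ∫ t in Set.Ioc (0:ℝ) h, Real.exp (-β*t) • sg.T t f))
      (𝓝[>] (0:ℝ)) (𝓝 f) := by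
    have := (tendsto_exp_one (β := β)).smul (sg.tendsto_avg hc hβ f)
    rwa [one_smul] at this
  exact (Tendsto.congr' (Filter.EventuallyEq.symm e1) (t1.sub t2))

lemma memDom_res (hc : sg.IsContraction) {β : ℝ} (hβ : 0 < β) (f : Lp ℝ 2 μ) :
    sg.memDom (sg.res β f) := by
  refine ⟨β • sg.res β f - f, ?_⟩
  exact sg.tendsto_diff_quot hc hβ f (fun h hh => by rw [sg.T_res hc hβ f hh])

lemma gen_res (hc : sg.IsContraction) {β : ℝ} (hβ : 0 < β) (f : Lp ℝ 2 μ) :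
    sg.gen (sg.res β f) = β • sg.res β f - f :=
  sg.gen_eq_of_tendsto (sg.tendsto_diff_quot hc hβ f (fun h hh => by rw [sg.T_res hc hβ f hh]))

lemma res_gen (hc : sg.IsContraction) {β : ℝ} (hβ : 0 < β) {f : Lp ℝ 2 μ} (hf : sg.memDom f) :
    sg.res β (sg.gen f) = β • sg.res β f - f := by
  set C := (∫ t in Set.Ioi (0:ℝ), Real.exp (-β*t)) with hC
  have hC0 : 0 ≤ C := setIntegral_nonneg measurableSet_Ioi (fun t _ => (Real.exp_pos _).le)
  have main1 : Tendsto (fun h : ℝ => sg.res β (h⁻¹ • (sg.T h f - f))) (𝓝[>] (0:ℝ))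
      (𝓝 (sg.res β (sg.gen f))) := by
    rw [← tendsto_sub_nhds_zero_iff]
    have hb : ∀ h : ℝ, ‖sg.res β (h⁻¹ • (sg.T h f - f)) - sg.res β (sg.gen f)‖
        ≤ C * ‖h⁻¹ • (sg.T h f - f) - sg.gen f‖ := by
      intro h
      rw [← sg.res_sub hc hβ]
      exact sg.norm_res_le hc hβ _
    have hgt : Tendsto (fun h : ℝ => C * ‖h⁻¹ • (sg.T h f - f) - sg.gen f‖)
        (𝓝[>] (0:ℝ)) (𝓝 0) := by
      have h0 : Tendsto (fun h : ℝ => h⁻¹ • (sg.T h f - f) - sg.gen f) (𝓝[>] (0:ℝ)) (𝓝 0) := by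
        rw [tendsto_sub_nhds_zero_iff]
        exact sg.tendsto_gen hf
      have := (h0.norm).const_mul C
      simpa using this
    exact squeeze_zero_norm hb hgt
  have main2 : Tendsto (fun h : ℝ => sg.res β (h⁻¹ • (sg.T h f - f))) (𝓝[>] (0:ℝ))
      (𝓝 (β • sg.res β f - f)) := by
    have base := sg.tendsto_diff_quot hc hβ f (X := fun h => sg.res β (sg.T h f) - sg.res β f)
      (fun h hh => by
        show sg.res β (sg.T h f) - sg.res β f = _
        rw [sg.res_T hc hβ f hh])
    refine base.congr (fun h => ?_)
    rw [sg.res_smul hc hβ, sg.res_sub hc hβ]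
  exact tendsto_nhds_unique main1 main2

end Semigroup2


namespace Semigroup2

variable {μ : Measure E} (sg : Semigroup2 μ)

lemma res_beta_sub_gen (hc : sg.IsContraction) {β : ℝ} (hβ : 0 < β) {f : Lp ℝ 2 μ}
    (hf : sg.memDom f) : sg.res β (β • f - sg.gen f) = f := by
  rw [sg.res_sub hc hβ, sg.res_smul hc hβ, sg.res_gen hc hβ hf]
  abel

end Semigroup2

section Translate

variable {μ : Measure E} (sg : Semigroup2 μ)

lemma toL2_neg {f : E → ℝ} (hf : MemLp f 2 μ) :
    toL2 μ (fun x => -(f x)) = - toL2 μ f := by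
  have h : (fun x => -(f x)) = fun x => (-1:ℝ) * f x := by funext x; ring
  rw [h, toL2_smul hf, neg_one_smul]

lemma Af_memℒp (f : E → ℝ) : MemLp (sg.Af f) 2 μ := Lp.memLp _

lemma toL2_Af (f : E → ℝ) : toL2 μ (sg.Af f) = sg.gen (toL2 μ f) := toL2_coeFn _

lemma ip_Af_self (f : E → ℝ) :
    ip μ (sg.Af f) (sg.Af f) = ‖sg.gen (toL2 μ f)‖^2 := by
  rw [ip_self_eq_norm_sq (Af_memℒp sg f), toL2_Af]

lemma S_eq_inner (f : E → ℝ) {g : E → ℝ} (hg : MemLp g 2 μ) :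
    sg.S f g = ⟪-(sg.gen (toL2 μ f)), toL2 μ g⟫ := by
  rw [Semigroup2.S]
  have h1 : MemLp (fun x => -(sg.Af f x)) 2 μ := by
    have h2 : (fun x => -(sg.Af f x)) = fun x => (-1:ℝ) * sg.Af f x := by funext x; ring
    rw [h2]
    exact (Af_memℒp sg f).const_mul _
  rw [ip_eq_inner h1 hg]
  congr 1
  rw [toL2_neg (Af_memℒp sg f), toL2_Af]

lemma Sb_eq_inner {f : E → ℝ} (hf : MemLp f 2 μ) {g : E → ℝ} (hg : MemLp g 2 μ) (β : ℝ) :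
    sg.Sb β f g = ⟪β • toL2 μ f - sg.gen (toL2 μ f), toL2 μ g⟫ := by
  rw [Semigroup2.Sb, S_eq_inner sg f hg, ip_eq_inner hf hg, inner_sub_left,
    real_inner_smul_left, inner_neg_left]
  ring

end Translate

/-! ### Frame-level lemmas -/

namespace Frame

variable (fr : Frame E)

lemma D_measurable {f : E → ℝ} (hf : f ∈ fr.D) : Measurable f := hf.1

lemma D_memℒp {f : E → ℝ} (hf : f ∈ fr.D) (n : ℕ) : MemLp f 2 (fr.ν n) := hf.2.1 n

lemma C_mem_D {f : E → ℝ} (hf : f ∈ fr.C) : f ∈ fr.D := hf.1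

lemma F_subset_D : fr.F ⊆ fr.D := fun f hf =>
  ⟨fr.F_measurable f hf, fr.F_memL2 f hf, fr.F_tendsto f hf⟩

lemma ip_F_pair_tendsto {f g : E → ℝ} (hf : f ∈ fr.F) (hg : g ∈ fr.F) :
    Tendsto (fun n => ip (fr.ν n) f g) atTop (𝓝 (ip (fr.ν 0) f g)) := by
  have hsum : (fun x => (1:ℝ) * f x + (1:ℝ) * g x) ∈ fr.F := fr.F_linear f hf g hg 1 1
  have hs := fr.F_tendsto _ hsum
  have hff := fr.F_tendsto f hf
  have hgg := fr.F_tendsto g hg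
  have key : ∀ n, ip (fr.ν n) f g =
      (ip (fr.ν n) (fun x => (1:ℝ) * f x + (1:ℝ) * g x) (fun x => (1:ℝ) * f x + (1:ℝ) * g x)
        - ip (fr.ν n) f f - ip (fr.ν n) g g) / 2 := by
    intro n
    have hfl := fr.F_memL2 f hf n
    have hgl := fr.F_memL2 g hg n
    have hsl := fr.F_memL2 _ hsum n
    have e1 : ip (fr.ν n) (fun x => (1:ℝ) * f x + (1:ℝ) * g x)
        (fun x => (1:ℝ) * f x + (1:ℝ) * g x)
        = ⟪toL2 (fr.ν n) f + toL2 (fr.ν n) g, toL2 (fr.ν n) f + toL2 (fr.ν n) g⟫ := by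
      rw [ip_eq_inner hsl hsl]
      have : toL2 (fr.ν n) (fun x => (1:ℝ) * f x + (1:ℝ) * g x)
          = toL2 (fr.ν n) f + toL2 (fr.ν n) g := by
        have h2 : (fun x => (1:ℝ) * f x + (1:ℝ) * g x) = fun x => f x - (-(g x)) := by
          funext x; ring
        rw [h2, toL2_sub hfl (by
          have h3 : (fun x => -(g x)) = fun x => (-1:ℝ) * g x := by funext x; ring
          rw [h3]; exact hgl.const_mul _), toL2_neg hgl, sub_neg_eq_add]
      rw [this]
    rw [e1, ip_eq_inner hfl hgl, ip_eq_inner hfl hfl, ip_eq_inner hgl hgl,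
      inner_add_add_self]
    have : ⟪toL2 (fr.ν n) g, toL2 (fr.ν n) f⟫ = ⟪toL2 (fr.ν n) f, toL2 (fr.ν n) g⟫ :=
      real_inner_comm _ _
    rw [this]
    ring
  have lim : Tendsto (fun n =>
      (ip (fr.ν n) (fun x => (1:ℝ) * f x + (1:ℝ) * g x) (fun x => (1:ℝ) * f x + (1:ℝ) * g x)
        - ip (fr.ν n) f f - ip (fr.ν n) g g) / 2) atTop
      (𝓝 ((ip (fr.ν 0) (fun x => (1:ℝ) * f x + (1:ℝ) * g x)
          (fun x => (1:ℝ) * f x + (1:ℝ) * g x)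
        - ip (fr.ν 0) f f - ip (fr.ν 0) g g) / 2)) := ((hs.sub hff).sub hgg).div_const 2
  rw [key 0]
  exact lim.congr (fun n => (key n).symm)

lemma F_subset_C : fr.F ⊆ fr.C := fun f hf =>
  ⟨fr.F_subset_D hf, fun n _ => ⟨f, hf, by rfl⟩,
    fun g hg => fr.ip_F_pair_tendsto hf hg⟩

end Frame


section IpAlgebra

variable {μ : Measure E}

lemma ip_congr_left {a a' b : E → ℝ} (h : a =ᵐ[μ] a') : ip μ a b = ip μ a' b := by
  refine integral_congr_ae ?_
  filter_upwards [h] with x hx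
  rw [hx]

lemma ip_congr_right {a b b' : E → ℝ} (h : b =ᵐ[μ] b') : ip μ a b = ip μ a b' := by
  refine integral_congr_ae ?_
  filter_upwards [h] with x hx
  rw [hx]

lemma ip_comm (a b : E → ℝ) : ip μ a b = ip μ b a := by
  unfold ip
  refine integral_congr_ae (Filter.Eventually.of_forall fun x => ?_)
  ring

lemma abs_ip_le {f g : E → ℝ} (hf : MemLp f 2 μ) (hg : MemLp g 2 μ) :
    |ip μ f g| ≤ Real.sqrt (ip μ f f) * Real.sqrt (ip μ g g) := by
  rw [ip_eq_inner hf hg, ip_self_eq_norm_sq hf, ip_self_eq_norm_sq hg,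
    Real.sqrt_sq (norm_nonneg _), Real.sqrt_sq (norm_nonneg _)]
  exact abs_real_inner_le_norm _ _

lemma memℒp_sub {f g : E → ℝ} (hf : MemLp f 2 μ) (hg : MemLp g 2 μ) :
    MemLp (fun x => f x - g x) 2 μ := hf.sub hg

lemma memℒp_cmul {f : E → ℝ} (hf : MemLp f 2 μ) (c : ℝ) :
    MemLp (fun x => c * f x) 2 μ := hf.const_mul c

lemma ip_sub_left {a b f : E → ℝ} (ha : MemLp a 2 μ) (hb : MemLp b 2 μ)
    (hf : MemLp f 2 μ) :
    ip μ (fun x => a x - b x) f = ip μ a f - ip μ b f := by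
  rw [ip_eq_inner (memℒp_sub ha hb) hf, ip_eq_inner ha hf, ip_eq_inner hb hf,
    toL2_sub ha hb, inner_sub_left]

lemma ip_sub_right {a b f : E → ℝ} (ha : MemLp a 2 μ) (hb : MemLp b 2 μ)
    (hf : MemLp f 2 μ) :
    ip μ a (fun x => b x - f x) = ip μ a b - ip μ a f := by
  rw [ip_eq_inner ha (memℒp_sub hb hf), ip_eq_inner ha hb, ip_eq_inner ha hf,
    toL2_sub hb hf, inner_sub_right]

lemma ip_smul_left {a f : E → ℝ} (ha : MemLp a 2 μ) (hf : MemLp f 2 μ) (c : ℝ) :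
    ip μ (fun x => c * a x) f = c * ip μ a f := by
  rw [ip_eq_inner (memℒp_cmul ha c) hf, ip_eq_inner ha hf, toL2_smul ha c,
    real_inner_smul_left]

lemma ip_smul_right {a f : E → ℝ} (ha : MemLp a 2 μ) (hf : MemLp f 2 μ) (c : ℝ) :
    ip μ a (fun x => c * f x) = c * ip μ a f := by
  rw [ip_eq_inner ha (memℒp_cmul hf c), ip_eq_inner ha hf, toL2_smul hf c,
    real_inner_smul_right]

lemma ip_sub_self (a b : E → ℝ) (ha : MemLp a 2 μ) (hb : MemLp b 2 μ) :
    ip μ (fun x => a x - b x) (fun x => a x - b x)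
      = ip μ a a - 2 * ip μ a b + ip μ b b := by
  rw [ip_sub_left ha hb (memℒp_sub ha hb), ip_sub_right ha ha hb, ip_sub_right hb ha hb]
  rw [show ip μ b a = ip μ a b from ip_comm b a]
  ring

end IpAlgebra

lemma exists_bound_of_tendsto {f : ℕ → ℝ} {a : ℝ} (h : Tendsto f atTop (𝓝 a)) :
    ∃ B, ∀ n, f n ≤ B := by
  obtain ⟨B, hB⟩ := h.bddAbove_range
  exact ⟨B, fun n => hB (Set.mem_range_self n)⟩

namespace Frame

variable (fr : Frame E)

lemma ip_C_pair_tendsto {a b : E → ℝ} (ha : a ∈ fr.C) (hb : b ∈ fr.C) :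
    Tendsto (fun n => ip (fr.ν n) a b) atTop (𝓝 (ip (fr.ν 0) a b)) := by
  have haD := ha.1
  have hbD := hb.1
  obtain ⟨A0, hA0⟩ := exists_bound_of_tendsto haD.2.2
  set A := max A0 0 with hA
  have hAn : ∀ n, ip (fr.ν n) a a ≤ A := fun n => le_trans (hA0 n) (le_max_left _ _)
  have hA0' : (0:ℝ) ≤ A := le_max_right _ _
  rw [Metric.tendsto_atTop]
  intro ε hε
  set C₀ : ℝ := Real.sqrt A + Real.sqrt (ip (fr.ν 0) a a) + 1 with hC₀
  have hC₀pos : 0 < C₀ := by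
    have := Real.sqrt_nonneg A
    have := Real.sqrt_nonneg (ip (fr.ν 0) a a)
    linarith
  set δ : ℝ := ε / (2 * C₀) with hδdef
  have hδpos : 0 < δ := div_pos hε (by linarith)
  obtain ⟨φ, hφF, hφclose⟩ := fr.F_dense b hbD.1 (hbD.2.1 0) (δ^2) (by positivity)
  have hr : Tendsto (fun n => ip (fr.ν n) (fun x => b x - φ x) (fun x => b x - φ x))
      atTop (𝓝 (ip (fr.ν 0) (fun x => b x - φ x) (fun x => b x - φ x))) := by
    have key : ∀ n, ip (fr.ν n) (fun x => b x - φ x) (fun x => b x - φ x)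
        = ip (fr.ν n) b b - 2 * ip (fr.ν n) b φ + ip (fr.ν n) φ φ :=
      fun n => ip_sub_self b φ (hbD.2.1 n) (fr.F_memL2 φ hφF n)
    have base : Tendsto (fun n => ip (fr.ν n) b b - 2 * ip (fr.ν n) b φ + ip (fr.ν n) φ φ)
        atTop (𝓝 (ip (fr.ν 0) b b - 2 * ip (fr.ν 0) b φ + ip (fr.ν 0) φ φ)) :=
      (hbD.2.2.sub ((hb.2.2 φ hφF).const_mul 2)).add (fr.F_tendsto φ hφF)
    rw [key 0]
    exact base.congr (fun n => (key n).symm)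
  have hev1 : ∀ᶠ n in atTop,
      ip (fr.ν n) (fun x => b x - φ x) (fun x => b x - φ x) < δ^2 :=
    hr.eventually_lt_const hφclose
  have hev2 : ∀ᶠ n in atTop, |ip (fr.ν n) a φ - ip (fr.ν 0) a φ| < δ := by
    have h2 := (ha.2.2 φ hφF)
    rw [Metric.tendsto_atTop] at h2
    obtain ⟨N, hN⟩ := h2 δ hδpos
    exact Filter.eventually_atTop.2 ⟨N, fun n hn => by
      have := hN n hn; rwa [Real.dist_eq] at this⟩
  rw [Filter.eventually_atTop] at hev1 hev2
  obtain ⟨N1, hN1⟩ := hev1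
  obtain ⟨N2, hN2⟩ := hev2
  refine ⟨max N1 N2, fun n hn => ?_⟩
  have hn1 := hN1 n (le_trans (le_max_left _ _) hn)
  have hn2 := hN2 n (le_trans (le_max_right _ _) hn)
  have han := haD.2.1 n
  have hbn := hbD.2.1 n
  have hφn := fr.F_memL2 φ hφF n
  have hb0 := hbD.2.1 0
  have hφ0 := fr.F_memL2 φ hφF 0
  have ha0 := haD.2.1 0
  have split : ip (fr.ν n) a b - ip (fr.ν 0) a b
      = ip (fr.ν n) a (fun x => b x - φ x) + (ip (fr.ν n) a φ - ip (fr.ν 0) a φ)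
        + ip (fr.ν 0) a (fun x => φ x - b x) := by
    rw [ip_sub_right han hbn hφn, ip_sub_right ha0 hφ0 hb0]
    ring
  have hsqrtn : Real.sqrt (ip (fr.ν n) (fun x => b x - φ x) (fun x => b x - φ x)) ≤ δ := by
    have := Real.sqrt_le_sqrt hn1.le
    rwa [Real.sqrt_sq hδpos.le] at this
  have hsqrt0 : Real.sqrt (ip (fr.ν 0) (fun x => φ x - b x) (fun x => φ x - b x)) ≤ δ := by
    have hflip : ip (fr.ν 0) (fun x => φ x - b x) (fun x => φ x - b x)
        = ip (fr.ν 0) (fun x => b x - φ x) (fun x => b x - φ x) := by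
      unfold ip
      refine integral_congr_ae (Filter.Eventually.of_forall fun x => by ring)
    rw [hflip]
    have := Real.sqrt_le_sqrt hφclose.le
    rwa [Real.sqrt_sq hδpos.le] at this
  have hT1 : |ip (fr.ν n) a (fun x => b x - φ x)| ≤ Real.sqrt A * δ := by
    refine le_trans (abs_ip_le han (memℒp_sub hbn hφn)) ?_
    exact mul_le_mul (Real.sqrt_le_sqrt (hAn n)) hsqrtn (Real.sqrt_nonneg _)
      (Real.sqrt_nonneg _)
  have hT3 : |ip (fr.ν 0) a (fun x => φ x - b x)| ≤ Real.sqrt (ip (fr.ν 0) a a) * δ := by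
    refine le_trans (abs_ip_le ha0 (memℒp_sub hφ0 hb0)) ?_
    exact mul_le_mul_of_nonneg_left hsqrt0 (Real.sqrt_nonneg _)
  rw [Real.dist_eq, split]
  have habs : |ip (fr.ν n) a (fun x => b x - φ x) + (ip (fr.ν n) a φ - ip (fr.ν 0) a φ)
      + ip (fr.ν 0) a (fun x => φ x - b x)|
      ≤ |ip (fr.ν n) a (fun x => b x - φ x)| + |ip (fr.ν n) a φ - ip (fr.ν 0) a φ|
        + |ip (fr.ν 0) a (fun x => φ x - b x)| := by
    exact (abs_add_le _ _).trans (add_le_add_left (abs_add_le _ _) _)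
  have hCδ : C₀ * δ = ε/2 := by
    rw [hδdef]
    field_simp
  have hfin : Real.sqrt A * δ + δ + Real.sqrt (ip (fr.ν 0) a a) * δ = C₀ * δ := by
    rw [hC₀]; ring
  calc |ip (fr.ν n) a (fun x => b x - φ x) + (ip (fr.ν n) a φ - ip (fr.ν 0) a φ)
      + ip (fr.ν 0) a (fun x => φ x - b x)|
      ≤ |ip (fr.ν n) a (fun x => b x - φ x)| + |ip (fr.ν n) a φ - ip (fr.ν 0) a φ|
        + |ip (fr.ν 0) a (fun x => φ x - b x)| := habs
  _ < Real.sqrt A * δ + δ + Real.sqrt (ip (fr.ν 0) a a) * δ := by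
      have := hT1
      have := hT3
      linarith [hn2]
  _ = ε/2 := by rw [hfin, hCδ]
  _ < ε := by linarith

end Frame


namespace Frame

variable (fr : Frame E)

lemma C_sub {a b : E → ℝ} (ha : a ∈ fr.C) (hb : b ∈ fr.C) :
    (fun x => a x - b x) ∈ fr.C := by
  have haD := ha.1
  have hbD := hb.1
  refine ⟨⟨haD.1.sub hbD.1, fun n => memℒp_sub (haD.2.1 n) (hbD.2.1 n), ?_⟩, ?_, ?_⟩
  · have key : ∀ n, ip (fr.ν n) (fun x => a x - b x) (fun x => a x - b x)
        = ip (fr.ν n) a a - 2 * ip (fr.ν n) a b + ip (fr.ν n) b b :=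
      fun n => ip_sub_self a b (haD.2.1 n) (hbD.2.1 n)
    have base := (haD.2.2.sub ((fr.ip_C_pair_tendsto ha hb).const_mul 2)).add hbD.2.2
    rw [key 0]
    exact base.congr (fun n => (key n).symm)
  · intro n hn
    obtain ⟨fa, hfa, hae_a⟩ := ha.2.1 n hn
    obtain ⟨fb, hfb, hae_b⟩ := hb.2.1 n hn
    refine ⟨fun x => (1:ℝ) * fa x + (-1:ℝ) * fb x, fr.F_linear fa hfa fb hfb 1 (-1), ?_⟩
    filter_upwards [hae_a, hae_b] with x hxa hxb
    rw [hxa, hxb]; ring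
  · intro ψ hψ
    have key : ∀ n, ip (fr.ν n) (fun x => a x - b x) ψ
        = ip (fr.ν n) a ψ - ip (fr.ν n) b ψ :=
      fun n => ip_sub_left (haD.2.1 n) (hbD.2.1 n) (fr.F_memL2 ψ hψ n)
    have base := (ha.2.2 ψ hψ).sub (hb.2.2 ψ hψ)
    rw [key 0]
    exact base.congr (fun n => (key n).symm)

lemma C_smul {a : E → ℝ} (t : ℝ) (ha : a ∈ fr.C) :
    (fun x => t * a x) ∈ fr.C := by
  have haD := ha.1
  refine ⟨⟨(measurable_const.mul haD.1 : Measurable fun x => t * a x),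
    fun n => memℒp_cmul (haD.2.1 n) t, ?_⟩, ?_, ?_⟩
  · have key : ∀ n, ip (fr.ν n) (fun x => t * a x) (fun x => t * a x)
        = t * (t * ip (fr.ν n) a a) := by
      intro n
      rw [ip_smul_left (haD.2.1 n) (memℒp_cmul (haD.2.1 n) t) t,
        ip_smul_right (haD.2.1 n) (haD.2.1 n) t]
    have base := (haD.2.2.const_mul t).const_mul t
    rw [key 0]
    exact base.congr (fun n => (key n).symm)
  · intro n hn
    obtain ⟨fa, hfa, hae_a⟩ := ha.2.1 n hn
    refine ⟨fun x => t * fa x + (0:ℝ) * fa x, fr.F_linear fa hfa fa hfa t 0, ?_⟩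
    filter_upwards [hae_a] with x hxa
    rw [hxa]; ring
  · intro ψ hψ
    have key : ∀ n, ip (fr.ν n) (fun x => t * a x) ψ = t * ip (fr.ν n) a ψ :=
      fun n => ip_smul_left (haD.2.1 n) (fr.F_memL2 ψ hψ n) t
    have base := (ha.2.2 ψ hψ).const_mul t
    rw [key 0]
    exact base.congr (fun n => (key n).symm)

lemma norm_le_of_pairing {h : E → ℝ} (hm : Measurable h) (hl : MemLp h 2 (fr.ν 0))
    {c : ℝ} (hc : 0 ≤ c)
    (hb : ∀ φ ∈ fr.F, |ip (fr.ν 0) h φ| ≤ c * Real.sqrt (ip (fr.ν 0) φ φ)) :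
    ip (fr.ν 0) h h ≤ c ^ 2 := by
  set H := toL2 (fr.ν 0) h with hH
  have hnorm2 : ∀ ε : ℝ, 0 < ε → ‖H‖^2 ≤ c * ‖H‖ + ε * (‖H‖ + c) := by
    intro ε hε
    obtain ⟨φ, hφF, hφclose⟩ := fr.F_dense h hm hl (ε^2) (by positivity)
    have hφ0 := fr.F_memL2 φ hφF 0
    set Φ := toL2 (fr.ν 0) φ with hΦ
    have hdiff : ‖H - Φ‖ ≤ ε := by
      have e1 : ip (fr.ν 0) (fun x => h x - φ x) (fun x => h x - φ x)
          = ‖H - Φ‖^2 := by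
        rw [ip_self_eq_norm_sq (memℒp_sub hl hφ0), toL2_sub hl hφ0]
      have : ‖H - Φ‖^2 ≤ ε^2 := by rw [← e1]; exact hφclose.le
      have := Real.sqrt_le_sqrt this
      rwa [Real.sqrt_sq (norm_nonneg _), Real.sqrt_sq hε.le] at this
    have e2 : ‖H‖^2 = ⟪H, H - Φ⟫ + ⟪H, Φ⟫ := by
      rw [← inner_add_right, sub_add_cancel, real_inner_self_eq_norm_sq]
    have e3 : ⟪H, H - Φ⟫ ≤ ‖H‖ * ε := by
      refine (real_inner_le_norm _ _).trans ?_
      exact mul_le_mul_of_nonneg_left hdiff (norm_nonneg _)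
    have e4 : ⟪H, Φ⟫ ≤ c * ‖Φ‖ := by
      have := hb φ hφF
      rw [ip_eq_inner hl hφ0, ip_self_eq_norm_sq hφ0,
        Real.sqrt_sq (norm_nonneg _)] at this
      calc ⟪H, Φ⟫ ≤ |⟪H, Φ⟫| := le_abs_self _
      _ ≤ c * ‖Φ‖ := this
    have e5 : ‖Φ‖ ≤ ‖H‖ + ε := by
      calc ‖Φ‖ = ‖H - (H - Φ)‖ := by rw [sub_sub_cancel]
      _ ≤ ‖H‖ + ‖H - Φ‖ := norm_sub_le _ _
      _ ≤ ‖H‖ + ε := by linarith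
    calc ‖H‖^2 = ⟪H, H - Φ⟫ + ⟪H, Φ⟫ := e2
    _ ≤ ‖H‖ * ε + c * ‖Φ‖ := by linarith
    _ ≤ ‖H‖ * ε + c * (‖H‖ + ε) := by nlinarith
    _ = c * ‖H‖ + ε * (‖H‖ + c) := by ring
  have hsq : ‖H‖^2 ≤ c * ‖H‖ := by
    by_contra hcon
    push_neg at hcon
    set ε := (‖H‖^2 - c * ‖H‖) / (‖H‖ + c + 1) with hεdef
    have hpos : 0 < ‖H‖ + c + 1 := by positivity
    have hεpos : 0 < ε := div_pos (by linarith) hpos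
    have := hnorm2 ε hεpos
    have hlt : ε * (‖H‖ + c) < ‖H‖^2 - c * ‖H‖ := by
      rw [hεdef]
      rw [div_mul_eq_mul_div, div_lt_iff₀ hpos]
      have h1 : (0:ℝ) < ‖H‖^2 - c * ‖H‖ := by linarith
      nlinarith [norm_nonneg H]
    linarith
  have hnorm : ‖H‖ ≤ c := by
    rcases eq_or_lt_of_le (norm_nonneg H) with h0 | h0
    · rw [← h0]; exact hc
    · nlinarith
  calc ip (fr.ν 0) h h = ‖H‖^2 := ip_self_eq_norm_sq hl
  _ ≤ c^2 := by nlinarith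

end Frame


lemma ip_zero_left {μ : Measure E} (f : E → ℝ) : ip μ (fun _ => (0:ℝ)) f = 0 := by
  simp [ip]

lemma ip_zero_right {μ : Measure E} (f : E → ℝ) : ip μ f (fun _ => (0:ℝ)) = 0 := by
  simp [ip]

namespace Frame

variable (fr : Frame E)

lemma ae_mem_En (n : ℕ) : ∀ᵐ x ∂(fr.ν n), x ∈ fr.En n := by
  rw [MeasureTheory.ae_iff]
  exact fr.nullEn n

lemma bounded_of_wconv {us : ℕ → E → ℝ} (hus : ∀ n, us n ∈ fr.C)
    {w : E → ℝ} (hw : fr.WConv us w) :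
    ∃ K : ℝ, 0 ≤ K ∧ ∀ n, ip (fr.ν n) (us n) (us n) ≤ K := by
  by_contra hcon
  push_neg at hcon
  set ρ : ℕ → ℝ := fun n => ip (fr.ν n) (us n) (us n) with hρdef
  have husD : ∀ n, us n ∈ fr.D := fun n => (hus n).1
  have husmeas : ∀ n, Measurable (us n) := fun n => (husD n).1
  have husl2 : ∀ n m, MemLp (us n) 2 (fr.ν m) := fun n m => (husD n).2.1 m
  have hρ0 : ∀ n, 0 ≤ ρ n := fun n => ip_self_nonneg (husl2 n n)
  set t : ℕ → ℝ := fun n => Real.sqrt (ρ n) with htdef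
  have ht0 : ∀ n, 0 ≤ t n := fun n => Real.sqrt_nonneg _
  have htsq : ∀ n, t n ^ 2 = ρ n := fun n => Real.sq_sqrt (hρ0 n)
  set s : ℕ → ℝ := fun n => ρ n / (1 + t n) with hsdef
  have h1t : ∀ n, 0 < 1 + t n := fun n => by have := ht0 n; linarith
  have hs0 : ∀ n, 0 ≤ s n := fun n => div_nonneg (hρ0 n) (h1t n).le
  have hst : ∀ n, ρ n = s n * (1 + t n) := fun n => by
    rw [hsdef]; field_simp [(h1t n).ne']
  -- s is unbounded
  have hsu : ∀ y : ℝ, ∃ n, y < s n := by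
    intro y
    by_contra hsb
    push_neg at hsb
    set y0 : ℝ := max y 0 with hy0
    have hy00 : 0 ≤ y0 := le_max_right _ _
    have hsb' : ∀ n, s n ≤ y0 := fun n => le_trans (hsb n) (le_max_left _ _)
    have htb : ∀ n, t n ≤ y0 + 1 := by
      intro n
      by_contra htc
      push_neg at htc
      have h1 : ρ n ≤ y0 * (1 + t n) := by
        calc ρ n = s n * (1 + t n) := hst n
        _ ≤ y0 * (1 + t n) := mul_le_mul_of_nonneg_right (hsb' n) (h1t n).le
      have h2 : t n ^ 2 ≤ y0 + y0 * t n := by rw [htsq n]; linarith [h1]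
      nlinarith [ht0 n]
    obtain ⟨n, hn⟩ := hcon ((y0 + 1) ^ 2) (by positivity)
    have : ρ n ≤ (y0 + 1) ^ 2 := by
      rw [← htsq n]
      have := htb n
      nlinarith [ht0 n]
    linarith
  -- running maximum
  set M : ℕ → ℝ := fun n => (Finset.range (n+1)).sup' Finset.nonempty_range_add_one s
    with hMdef
  have hsM : ∀ m n, m ≤ n → s m ≤ M n := fun m n hmn =>
    Finset.le_sup' s (Finset.mem_range.2 (Nat.lt_succ_of_le hmn))
  have hMle : ∀ n y, (∀ m, m ≤ n → s m ≤ y) → M n ≤ y := fun n y hy =>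
    Finset.sup'_le _ _ (fun m hm => hy m (Nat.lt_succ_iff.1 (Finset.mem_range.1 hm)))
  have hMmono : Monotone M := fun n m hnm =>
    hMle n (M m) (fun k hk => hsM k m (le_trans hk hnm))
  have hM0 : ∀ n, 0 ≤ M n := fun n => le_trans (hs0 n) (hsM n n le_rfl)
  set b : ℕ → ℝ := fun n => (1 + M n)⁻¹ with hbdef
  have hb0 : ∀ n, 0 < b n := fun n => inv_pos.2 (by have := hM0 n; linarith)
  have hbtend : Tendsto b atTop (𝓝 0) := by
    have h1 : Tendsto (fun n => 1 + M n) atTop atTop := by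
      refine tendsto_atTop_atTop_of_monotone
        (fun n m hnm => by have := hMmono hnm; linarith) (fun y => ?_)
      obtain ⟨n, hn⟩ := hsu y
      exact ⟨n, by have := hsM n n le_rfl; linarith⟩
    exact h1.inv_tendsto_atTop
  set a : ℕ → ℝ := fun n => b n / (1 + t n) with hadef
  have ha0 : ∀ n, 0 ≤ a n := fun n => div_nonneg (hb0 n).le (h1t n).le
  have hat : ∀ n, a n * t n ≤ b n := by
    intro n
    rw [hadef]
    rw [div_mul_eq_mul_div, div_le_iff₀ (h1t n)]
    have := (hb0 n).le
    nlinarith [ht0 n]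
  -- the test function ψ
  set term : ℕ → E → ℝ :=
    fun m => (fr.En (m+1)).indicator (fun y => a (m+1) * us (m+1) y) with htermdef
  have htermmeas : ∀ m, Measurable (term m) := fun m =>
    (measurable_const.mul (husmeas (m+1))).indicator (fr.measEn (m+1))
  have hterm0 : ∀ x m k, x ∈ fr.En (m+1) → k ≠ m → term k x = 0 := by
    intro x m k hx hkm
    refine Set.indicator_of_notMem ?_ _
    intro hxk
    exact Set.disjoint_left.1 (fr.disjEn (k+1) (m+1) (by omega)) hxk hx
  have hsummable : ∀ x, Summable (fun m => term m x) := by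
    intro x
    by_cases hx : ∃ m, x ∈ fr.En (m+1)
    · obtain ⟨m, hm⟩ := hx
      exact (hasSum_single m (fun k hk => hterm0 x m k hm hk)).summable
    · push_neg at hx
      have : (fun m => term m x) = fun _ => 0 := by
        funext m
        exact Set.indicator_of_notMem (hx m) _
      rw [this]
      exact summable_zero
  set ψ : E → ℝ := fun x => ∑' m, term m x with hψdef
  have hψmeas : Measurable ψ := by
    refine measurable_of_tendsto_metrizable' atTop
      (fun N => Finset.measurable_sum (Finset.range N) (fun m _ => htermmeas m)) ?_
    rw [tendsto_pi_nhds]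
    exact fun x => (hsummable x).hasSum.tendsto_sum_nat
  have heval : ∀ m, ∀ x ∈ fr.En (m+1), ψ x = a (m+1) * us (m+1) x := by
    intro m x hx
    have h1 : (∑' k, term k x) = term m x :=
      tsum_eq_single m (fun k hk => hterm0 x m k hx hk)
    show (∑' k, term k x) = a (m+1) * us (m+1) x
    rw [h1]
    exact Set.indicator_of_mem hx _
  have hzero : ∀ x ∈ fr.En 0, ψ x = 0 := by
    intro x hx
    show (∑' m, term m x) = 0
    have : ∀ m, term m x = 0 := by
      intro m
      refine Set.indicator_of_notMem ?_ _
      intro hxm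
      exact Set.disjoint_left.1 (fr.disjEn (m+1) 0 (by omega)) hxm hx
    calc (∑' m, term m x) = ∑' _ : ℕ, (0:ℝ) := tsum_congr this
    _ = 0 := tsum_zero
  have hae1 : ∀ m, ψ =ᵐ[fr.ν (m+1)] fun x => a (m+1) * us (m+1) x := by
    intro m
    filter_upwards [fr.ae_mem_En (m+1)] with x hx
    exact heval m x hx
  have hae0 : ψ =ᵐ[fr.ν 0] fun _ => (0:ℝ) := by
    filter_upwards [fr.ae_mem_En 0] with x hx
    exact hzero x hx
  have hψl2 : ∀ n, MemLp ψ 2 (fr.ν n) := by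
    intro n
    haveI := fr.prob n
    cases n with
    | zero => exact MemLp.ae_eq hae0.symm (memLp_const 0)
    | succ m => exact MemLp.ae_eq (hae1 m).symm ((husl2 (m+1) (m+1)).const_mul _)
  have hρcomp : ∀ m, ip (fr.ν (m+1)) ψ ψ = a (m+1) * (a (m+1) * ρ (m+1)) := by
    intro m
    rw [ip_congr_left (hae1 m), ip_congr_right (hae1 m),
      ip_smul_left (husl2 (m+1) (m+1)) ((husl2 (m+1) (m+1)).const_mul _) _,
      ip_smul_right (husl2 (m+1) (m+1)) (husl2 (m+1) (m+1)) _]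
  have ha2b : ∀ m, a (m+1) * (a (m+1) * ρ (m+1)) ≤ b (m+1) ^ 2 := by
    intro m
    have h1 : a (m+1) * (a (m+1) * ρ (m+1)) = (a (m+1) * t (m+1)) ^ 2 := by
      rw [← htsq (m+1)]; ring
    rw [h1]
    have h2 : 0 ≤ a (m+1) * t (m+1) := mul_nonneg (ha0 _) (ht0 _)
    nlinarith [hat (m+1), (hb0 (m+1)).le]
  have hb2 : Tendsto (fun n => b n ^ 2) atTop (𝓝 0) := by
    have := hbtend.mul hbtend
    rw [mul_zero] at this
    exact this.congr (fun n => by ring)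
  have hψD : ψ ∈ fr.D := by
    refine ⟨hψmeas, hψl2, ?_⟩
    have hip0 : ip (fr.ν 0) ψ ψ = 0 := by
      rw [ip_congr_left hae0, ip_zero_left]
    rw [hip0]
    refine squeeze_zero_norm' ?_ hb2
    refine Filter.eventually_atTop.2 ⟨1, fun n hn => ?_⟩
    match n, hn with
    | (m+1), _ =>
      rw [Real.norm_eq_abs, abs_of_nonneg (ip_self_nonneg (hψl2 _)), hρcomp m]
      exact ha2b m
  have hψC : ψ ∈ fr.C := by
    refine ⟨hψD, ?_, ?_⟩
    · intro n hn
      match n, hn with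
      | (m+1), _ =>
        obtain ⟨fa, hfa, haefa⟩ := (hus (m+1)).2.1 (m+1) (by omega)
        refine ⟨fun x => a (m+1) * fa x + (0:ℝ) * fa x,
          fr.F_linear fa hfa fa hfa (a (m+1)) 0, ?_⟩
        filter_upwards [hae1 m, haefa] with x h1 h2
        rw [h1, h2]; ring
    · intro f hf
      have hip0 : ip (fr.ν 0) ψ f = 0 := by rw [ip_congr_left hae0, ip_zero_left]
      rw [hip0]
      obtain ⟨Bf0, hBf0⟩ := exists_bound_of_tendsto (fr.F_tendsto f hf)
      set Bf := Real.sqrt (max Bf0 0) with hBf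
      have hfb : ∀ n, Real.sqrt (ip (fr.ν n) f f) ≤ Bf := fun n =>
        Real.sqrt_le_sqrt (le_trans (hBf0 n) (le_max_left _ _))
      have hBf0' : 0 ≤ Bf := Real.sqrt_nonneg _
      have hbBf : Tendsto (fun n => b n * Bf) atTop (𝓝 0) := by
        have := hbtend.mul_const Bf
        rwa [zero_mul] at this
      refine squeeze_zero_norm' ?_ hbBf
      refine Filter.eventually_atTop.2 ⟨1, fun n hn => ?_⟩
      match n, hn with
      | (m+1), _ =>
        have e1 : ip (fr.ν (m+1)) ψ f = a (m+1) * ip (fr.ν (m+1)) (us (m+1)) f := by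
          rw [ip_congr_left (hae1 m),
            ip_smul_left (husl2 (m+1) (m+1)) (fr.F_memL2 f hf (m+1)) _]
        rw [Real.norm_eq_abs, e1, abs_mul, abs_of_nonneg (ha0 (m+1))]
        have habsle : |ip (fr.ν (m+1)) (us (m+1)) f|
            ≤ t (m+1) * Real.sqrt (ip (fr.ν (m+1)) f f) :=
          abs_ip_le (husl2 (m+1) (m+1)) (fr.F_memL2 f hf (m+1))
        have h1 := hat (m+1)
        have h2 := hfb (m+1)
        have h3 := ht0 (m+1)
        have h4 := ha0 (m+1)
        have h5 := (hb0 (m+1)).le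
        have h6 := Real.sqrt_nonneg (ip (fr.ν (m+1)) f f)
        have h7 : 0 ≤ |ip (fr.ν (m+1)) (us (m+1)) f| := abs_nonneg _
        nlinarith [mul_le_mul_of_nonneg_left habsle h4,
          mul_le_mul_of_nonneg_right h1 h6, mul_le_mul_of_nonneg_left h2 h5]
  have hlim := hw ψ hψC
  have hwψ0 : ip (fr.ν 0) w ψ = 0 := by rw [ip_congr_right hae0, ip_zero_right]
  rw [hwψ0] at hlim
  have heq : ∀ m, ip (fr.ν (m+1)) (us (m+1)) ψ = b (m+1) * s (m+1) := by
    intro m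
    rw [ip_congr_right (hae1 m),
      ip_smul_right (husl2 (m+1) (m+1)) (husl2 (m+1) (m+1)) _]
    show b (m+1) / (1 + t (m+1)) * ρ (m+1) = b (m+1) * (ρ (m+1) / (1 + t (m+1)))
    have hne := (h1t (m+1)).ne'
    field_simp
  rw [Metric.tendsto_atTop] at hlim
  obtain ⟨N, hN⟩ := hlim (1/2) (by norm_num)
  set y : ℝ := max 1 (M N) with hydef
  have hPex : ∃ n, y < s n := hsu y
  set n₁ := Nat.find hPex with hn₁def
  have hn₁ : y < s n₁ := Nat.find_spec hPex
  have hmin : ∀ m, m < n₁ → ¬ y < s m := fun m hm => Nat.find_min hPex hm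
  have hn₁N : N < n₁ := by
    by_contra hle
    push_neg at hle
    have h1 := hsM n₁ N hle
    have hyM : M N ≤ y := le_max_right _ _
    linarith
  have hMn₁ : M n₁ = s n₁ := by
    refine le_antisymm ?_ (hsM n₁ n₁ le_rfl)
    refine hMle n₁ (s n₁) (fun m hm => ?_)
    rcases eq_or_lt_of_le hm with rfl | hlt
    · exact le_rfl
    · have h2 := hmin m hlt
      push_neg at h2
      exact le_trans h2 hn₁.le
  have hs1 : (1:ℝ) ≤ s n₁ := le_trans (le_max_left _ _) hn₁.le
  have hbig : (1:ℝ)/2 ≤ b n₁ * s n₁ := by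
    show (1:ℝ)/2 ≤ (1 + M n₁)⁻¹ * s n₁
    rw [hMn₁, inv_mul_eq_div, le_div_iff₀ (by linarith)]
    linarith
  obtain ⟨m, hm⟩ : ∃ m, n₁ = m + 1 := ⟨n₁ - 1, by omega⟩
  have hd := hN n₁ (by omega)
  rw [Real.dist_eq, hm, heq m, sub_zero,
    abs_of_nonneg (mul_nonneg (hb0 _).le (hs0 _))] at hd
  rw [hm] at hbig
  linarith

end Frame


lemma exists_subseq_tendsto_of_abs_le {f : ℕ → ℝ} {B : ℝ} (hB : ∀ n, |f n| ≤ B) :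
    ∃ L : ℝ, ∃ σ : ℕ → ℕ, StrictMono σ ∧ Tendsto (fun k => f (σ k)) atTop (𝓝 L) := by
  obtain ⟨a, _, σ, hσ, hlim⟩ := tendsto_subseq_of_bounded (Metric.isBounded_Icc (-B) B)
    (x := f) (fun n => Set.mem_Icc.2 (abs_le.1 (hB n)))
  exact ⟨a, σ, hσ, hlim⟩

lemma sublimit_le_of_limsup_le {f : ℕ → ℝ} {σ : ℕ → ℕ} {L c B : ℝ}
    (hσ : StrictMono σ) (hlim : Tendsto (fun k => f (σ k)) atTop (𝓝 L))
    (hbd : ∀ n, f n ≤ B) (hls : limsup f atTop ≤ c) : L ≤ c := by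
  refine le_of_forall_pos_le_add fun ε hε => ?_
  have h1 : limsup f atTop < c + ε := lt_of_le_of_lt hls (by linarith)
  have h2 : ∀ᶠ n in atTop, f n < c + ε :=
    Filter.eventually_lt_of_limsup_lt h1 ⟨B, Filter.eventually_atTop.2 ⟨0, fun n _ => hbd n⟩⟩
  have h3 : ∀ᶠ k in atTop, f (σ k) < c + ε := hσ.tendsto_atTop.eventually h2
  exact le_of_tendsto hlim (h3.mono fun k hk => hk.le)

set_option maxHeartbeats 2000000 in
/-- Lemma 2.8: if (c3) holds and the forms `S n` pre-converge to `S`, then condition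
(iii) implies condition (iv). -/
theorem condIII_implies_condIV (fr : Frame E) (sg : ∀ n, Semigroup2 (fr.ν n))
    (hcontr : ∀ n, (sg n).IsContraction)
    (hc3 : CondC3 fr sg) (hpre : PreConv fr sg) (h3 : CondIII fr sg) : CondIV fr sg := by
  intro β hβ u humeas hul2 humemD us hus hwex hMex hvw
  classical
  obtain ⟨w, hwmeas, hwl2, hw⟩ := hwex
  obtain ⟨M0, hM0⟩ := hMex
  have husC : ∀ n, us n ∈ fr.C := fun n => (hus n).1
  have husD : ∀ n, (sg n).memD (us n) := fun n => (hus n).2.1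
  have husl2 : ∀ n m, MemLp (us n) 2 (fr.ν m) := fun n m => (husC n).1.2.1 m
  obtain ⟨K, hK0, hK⟩ := fr.bounded_of_wconv husC hw
  set M : ℝ := max M0 0 with hMdef
  have hMn : ∀ n, ip (fr.ν n) ((sg n).Af (us n)) ((sg n).Af (us n)) ≤ M :=
    fun n => le_trans (hM0 n) (le_max_left _ _)
  have hM0' : (0:ℝ) ≤ M := le_max_right _ _
  set SK := Real.sqrt K with hSK
  set SM := Real.sqrt M with hSM
  have hSK0 : 0 ≤ SK := Real.sqrt_nonneg _
  have hSM0 : 0 ≤ SM := Real.sqrt_nonneg _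
  have hUn : ∀ n, ‖toL2 (fr.ν n) (us n)‖ ≤ SK := by
    intro n
    rw [← Real.sqrt_sq (norm_nonneg (toL2 (fr.ν n) (us n)))]
    refine Real.sqrt_le_sqrt ?_
    rw [← ip_self_eq_norm_sq (husl2 n n)]
    exact hK n
  have hAUn : ∀ n, ‖(sg n).gen (toL2 (fr.ν n) (us n))‖ ≤ SM := by
    intro n
    rw [← Real.sqrt_sq (norm_nonneg ((sg n).gen (toL2 (fr.ν n) (us n))))]
    refine Real.sqrt_le_sqrt ?_
    rw [← ip_Af_self (sg n) (us n)]
    exact hMn n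
  set B : ℝ := β * SK + SM with hBdef
  have hVn : ∀ n, ‖β • toL2 (fr.ν n) (us n) - (sg n).gen (toL2 (fr.ν n) (us n))‖ ≤ B := by
    intro n
    refine (norm_sub_le _ _).trans ?_
    rw [norm_smul, Real.norm_eq_abs, abs_of_pos hβ]
    exact add_le_add (mul_le_mul_of_nonneg_left (hUn n) hβ.le) (hAUn n)
  have vfun_eq : ∀ n (g' : E → ℝ), MemLp g' 2 (fr.ν n) →
      ip (fr.ν n) (fun x => β * us n x - (sg n).Af (us n) x) g'
        = ⟪β • toL2 (fr.ν n) (us n) - (sg n).gen (toL2 (fr.ν n) (us n)),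
            toL2 (fr.ν n) g'⟫ := by
    intro n g' hg'
    have h1 : MemLp (fun x => β * us n x) 2 (fr.ν n) := memℒp_cmul (husl2 n n) β
    have h2 : MemLp ((sg n).Af (us n)) 2 (fr.ν n) := Af_memℒp _ _
    rw [ip_eq_inner (memℒp_sub h1 h2) hg', toL2_sub h1 h2, toL2_smul (husl2 n n) β, toL2_Af]
  have ufun_eq : ∀ (g' : E → ℝ), MemLp g' 2 (fr.ν 0) →
      ip (fr.ν 0) (fun x => β * u x - (sg 0).Af u x) g'
        = ⟪β • toL2 (fr.ν 0) u - (sg 0).gen (toL2 (fr.ν 0) u), toL2 (fr.ν 0) g'⟫ := by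
    intro g' hg'
    have h1 : MemLp (fun x => β * u x) 2 (fr.ν 0) := memℒp_cmul hul2 β
    have h2 : MemLp ((sg 0).Af u) 2 (fr.ν 0) := Af_memℒp _ _
    rw [ip_eq_inner (memℒp_sub h1 h2) hg', toL2_sub h1 h2, toL2_smul hul2 β, toL2_Af]
  -- strong convergence of s-convergent sequences against a C-limit
  have strong : ∀ (ψs : ℕ → E → ℝ) (ψ' : E → ℝ), (∀ n, ψs n ∈ fr.C) → ψ' ∈ fr.C →
      (∀ φ ∈ fr.C, Tendsto (fun n => ip (fr.ν n) (ψs n) φ) atTop (𝓝 (ip (fr.ν 0) ψ' φ))) →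
      Tendsto (fun n => ip (fr.ν n) (ψs n) (ψs n)) atTop (𝓝 (ip (fr.ν 0) ψ' ψ')) →
      Tendsto (fun n => ‖toL2 (fr.ν n) (ψs n) - toL2 (fr.ν n) ψ'‖) atTop (𝓝 0) := by
    intro ψs ψ' hψsC hψ'C hpair hnorm
    have hψsl2 : ∀ n, MemLp (ψs n) 2 (fr.ν n) := fun n => (hψsC n).1.2.1 n
    have hψ'l2 : ∀ n, MemLp ψ' 2 (fr.ν n) := fun n => hψ'C.1.2.1 n
    have hsq : Tendsto (fun n => ‖toL2 (fr.ν n) (ψs n) - toL2 (fr.ν n) ψ'‖^2) atTop (𝓝 0) := by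
      have key : ∀ n, ‖toL2 (fr.ν n) (ψs n) - toL2 (fr.ν n) ψ'‖^2
          = ip (fr.ν n) (ψs n) (ψs n) - 2 * ip (fr.ν n) (ψs n) ψ' + ip (fr.ν n) ψ' ψ' := by
        intro n
        rw [← toL2_sub (hψsl2 n) (hψ'l2 n), ← ip_self_eq_norm_sq (memℒp_sub (hψsl2 n) (hψ'l2 n))]
        exact ip_sub_self _ _ (hψsl2 n) (hψ'l2 n)
      have base : Tendsto (fun n => ip (fr.ν n) (ψs n) (ψs n)
          - 2 * ip (fr.ν n) (ψs n) ψ' + ip (fr.ν n) ψ' ψ') atTop (𝓝 0) := by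
        have h1 := (hnorm.sub ((hpair ψ' hψ'C).const_mul 2)).add (fr.ip_C_pair_tendsto hψ'C hψ'C)
        have h2 : ip (fr.ν 0) ψ' ψ' - 2 * ip (fr.ν 0) ψ' ψ' + ip (fr.ν 0) ψ' ψ' = 0 := by ring
        rwa [h2] at h1
      exact base.congr (fun n => (key n).symm)
    have := hsq.sqrt
    rw [Real.sqrt_zero] at this
    refine this.congr (fun n => ?_)
    rw [Real.sqrt_sq (norm_nonneg _)]
  -- the block hypothesis of condition (iii)
  have block : ∀ ψ ∈ fr.C, ∀ ψs : ℕ → E → ℝ, (∀ n, ψs n ∈ fr.C) → fr.SConv ψs ψ →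
      Tendsto (fun n => (sg n).Sb β (us n) (ψs n)) atTop (𝓝 ((sg 0).Sb β u ψ)) := by
    intro ψ hψC ψs hψsC hsconv
    have hψsl2 : ∀ n, MemLp (ψs n) 2 (fr.ν n) := fun n => (hψsC n).1.2.1 n
    have hψl2 : ∀ n, MemLp ψ 2 (fr.ν n) := fun n => hψC.1.2.1 n
    have e1 : ∀ n, (sg n).Sb β (us n) (ψs n)
        = ⟪β • toL2 (fr.ν n) (us n) - (sg n).gen (toL2 (fr.ν n) (us n)),
            toL2 (fr.ν n) ψ⟫
          + ⟪β • toL2 (fr.ν n) (us n) - (sg n).gen (toL2 (fr.ν n) (us n)),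
              toL2 (fr.ν n) (ψs n) - toL2 (fr.ν n) ψ⟫ := by
      intro n
      rw [Sb_eq_inner (sg n) (husl2 n n) (hψsl2 n) β, ← inner_add_right, add_sub_cancel]
    have t1 : Tendsto (fun n => ⟪β • toL2 (fr.ν n) (us n) - (sg n).gen (toL2 (fr.ν n) (us n)),
        toL2 (fr.ν n) ψ⟫) atTop (𝓝 ((sg 0).Sb β u ψ)) := by
      have h1 := hvw ψ hψC
      rw [ufun_eq ψ (hψl2 0)] at h1
      have h2 : Tendsto (fun n => ip (fr.ν n) (fun x => β * us n x - (sg n).Af (us n) x) ψ)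
          atTop (𝓝 (⟪β • toL2 (fr.ν 0) u - (sg 0).gen (toL2 (fr.ν 0) u),
            toL2 (fr.ν 0) ψ⟫)) := h1
      have h3 := h2.congr (fun n => vfun_eq n ψ (hψl2 n))
      rwa [Sb_eq_inner (sg 0) hul2 (hψl2 0) β]
    have t2 : Tendsto (fun n => ⟪β • toL2 (fr.ν n) (us n) - (sg n).gen (toL2 (fr.ν n) (us n)),
        toL2 (fr.ν n) (ψs n) - toL2 (fr.ν n) ψ⟫) atTop (𝓝 0) := by
      have hstr := strong ψs ψ hψsC hψC hsconv.1 hsconv.2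
      refine squeeze_zero_norm (fun n => ?_) (by simpa using hstr.const_mul B)
      calc ‖⟪β • toL2 (fr.ν n) (us n) - (sg n).gen (toL2 (fr.ν n) (us n)),
          toL2 (fr.ν n) (ψs n) - toL2 (fr.ν n) ψ⟫‖
          ≤ ‖β • toL2 (fr.ν n) (us n) - (sg n).gen (toL2 (fr.ν n) (us n))‖
            * ‖toL2 (fr.ν n) (ψs n) - toL2 (fr.ν n) ψ‖ := by
            rw [Real.norm_eq_abs]; exact abs_real_inner_le_norm _ _
      _ ≤ B * ‖toL2 (fr.ν n) (ψs n) - toL2 (fr.ν n) ψ‖ :=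
          mul_le_mul_of_nonneg_right (hVn n) (norm_nonneg _)
    have := t1.add t2
    rw [add_zero] at this
    exact this.congr (fun n => (e1 n).symm)
  have CC := h3 β hβ u humeas hul2 humemD us hus ⟨w, hwmeas, hwl2, hw⟩ ⟨M0, hM0⟩ block
  -- w is in the domain
  have hwD : (sg 0).memD w :=
    (hpre.1 w hwmeas hwl2 id strictMono_id us (fun n => ⟨husC n, husD n⟩)
      (fun ψ hψ => hw ψ hψ) ⟨M0, fun k => hM0 k⟩).1
  -- fixed subsequence along which ⟪V n, U n⟫ converges
  have hxbd : ∀ n, |⟪β • toL2 (fr.ν n) (us n) - (sg n).gen (toL2 (fr.ν n) (us n)),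
      toL2 (fr.ν n) (us n)⟫| ≤ B * SK := by
    intro n
    refine (abs_real_inner_le_norm _ _).trans ?_
    exact mul_le_mul (hVn n) (hUn n) (norm_nonneg _) (le_trans (norm_nonneg _) (hVn n))
  obtain ⟨T, σ₀, hσ₀, hσ₀lim⟩ := exists_subseq_tendsto_of_abs_le hxbd
  -- objects at level 0
  set W := toL2 (fr.ν 0) w with hWdef
  set Uu := toL2 (fr.ν 0) u with hUudef
  have hWdom : (sg 0).memDom W := hwD
  have hUdom : (sg 0).memDom Uu := humemD
  set eh := W - Uu with hehdef
  have hehdom : (sg 0).memDom eh := (sg 0).memDom_sub hWdom hUdom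
  have hgeneh : (sg 0).gen eh = (sg 0).gen W - (sg 0).gen Uu := (sg 0).gen_sub hWdom hUdom
  set hh := β • eh - (sg 0).gen eh with hhhdef
  set c₀ : ℝ := β * ⟪W, W⟫ - ⟪(sg 0).gen W, W⟫ - T with hc₀def
  have key : ∀ g ∈ fr.C, c₀ ≤ ⟪toL2 (fr.ν 0) g, eh⟫
      + ⟪hh, (sg 0).res β (toL2 (fr.ν 0) g)⟫ := by
    intro g hgC
    set G := toL2 (fr.ν 0) g with hGdef
    set R := (sg 0).res β G with hRdef
    have hψfmeas : Measurable (⇑R) := (Lp.stronglyMeasurable R).measurable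
    have hψfl2 : MemLp (⇑R) 2 (fr.ν 0) := Lp.memLp R
    have htoL2ψf : toL2 (fr.ν 0) (⇑R) = R := toL2_coeFn R
    have hRdom : (sg 0).memDom R := (sg 0).memDom_res (hcontr 0) hβ G
    have hψfD : (sg 0).memD (⇑R) := by
      show (sg 0).memDom (toL2 (fr.ν 0) (⇑R))
      rw [htoL2ψf]; exact hRdom
    have hgenR : (sg 0).gen R = β • R - G := (sg 0).gen_res (hcontr 0) hβ G
    obtain ⟨ψ', hψ'C, hψ'ae⟩ := (hc3 g hgC β hβ).1
    have hψ'ae' : (⇑R : E → ℝ) =ᵐ[fr.ν 0] ψ' := hψ'ae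
    have hψ'l2 : ∀ n, MemLp ψ' 2 (fr.ν n) := fun n => hψ'C.1.2.1 n
    have htoL2ψ' : toL2 (fr.ν 0) ψ' = R := (toL2_congr hψfl2 hψ'ae').symm.trans htoL2ψf
    obtain ⟨ψs, hψsCD, hψsconv, hψsM, hψslimsup⟩ := hpre.2 (⇑R) hψfmeas hψfl2 hψfD
    have hψsC : ∀ n, ψs n ∈ fr.C := fun n => (hψsCD n).1
    have hψsD : ∀ n, (sg n).memD (ψs n) := fun n => (hψsCD n).2
    have hψsl2 : ∀ n m, MemLp (ψs n) 2 (fr.ν m) := fun n m => (hψsC n).1.2.1 m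
    obtain ⟨M1', hM1'⟩ := hψsM
    set M1 : ℝ := max M1' 0 with hM1def
    have hM1 : ∀ n, ip (fr.ν n) ((sg n).Af (ψs n)) ((sg n).Af (ψs n)) ≤ M1 :=
      fun n => le_trans (hM1' n) (le_max_left _ _)
    set SM1 := Real.sqrt M1 with hSM1def
    have hSM10 : 0 ≤ SM1 := Real.sqrt_nonneg _
    have hAΨn : ∀ n, ‖(sg n).gen (toL2 (fr.ν n) (ψs n))‖ ≤ SM1 := by
      intro n
      rw [← Real.sqrt_sq (norm_nonneg ((sg n).gen (toL2 (fr.ν n) (ψs n))))]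
      refine Real.sqrt_le_sqrt ?_
      rw [← ip_Af_self (sg n) (ψs n)]
      exact hM1 n
    have hCCg := CC (⇑R) hψfmeas hψfl2 hψfD ψs hψsCD hψsconv ⟨M1', hM1'⟩ hψslimsup
    have hψspair : ∀ φ ∈ fr.C, Tendsto (fun n => ip (fr.ν n) (ψs n) φ) atTop
        (𝓝 (ip (fr.ν 0) ψ' φ)) := by
      intro φ hφ
      have h1 := hψsconv.1 φ hφ
      rwa [ip_congr_left hψ'ae'] at h1
    have hψsnorm : Tendsto (fun n => ip (fr.ν n) (ψs n) (ψs n)) atTop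
        (𝓝 (ip (fr.ν 0) ψ' ψ')) := by
      have h1 := hψsconv.2
      rwa [ip_congr_left hψ'ae', ip_congr_right hψ'ae'] at h1
    have hstrong := strong ψs ψ' hψsC hψ'C hψspair hψsnorm
    have hrconv : Tendsto (fun n => ‖toL2 (fr.ν n) (ψs n)‖^2) atTop (𝓝 (‖R‖^2)) := by
      have h1 := hψsconv.2
      have h2 : ip (fr.ν 0) (⇑R) (⇑R) = ‖R‖^2 := by
        rw [ip_self_eq_norm_sq hψfl2, htoL2ψf]
      rw [h2] at h1
      refine h1.congr (fun n => ?_)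
      rw [ip_self_eq_norm_sq (hψsl2 n n)]
    obtain ⟨C₁', hC₁'⟩ := exists_bound_of_tendsto hrconv
    set SC₁ := Real.sqrt (max C₁' 0) with hSC₁def
    have hSC₁0 : 0 ≤ SC₁ := Real.sqrt_nonneg _
    have hΨn : ∀ n, ‖toL2 (fr.ν n) (ψs n)‖ ≤ SC₁ := by
      intro n
      rw [← Real.sqrt_sq (norm_nonneg (toL2 (fr.ν n) (ψs n)))]
      exact Real.sqrt_le_sqrt (le_trans (hC₁' n) (le_max_left _ _))
    -- sequences
    set q : ℕ → ℝ := fun n =>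
      ip (fr.ν n) (fun x => ψs n x - us n x) (fun x => ψs n x - us n x) with hqdef
    set p : ℕ → ℝ := fun n =>
      (sg n).S (fun x => ψs n x - us n x) (fun x => ψs n x - us n x) with hpdef
    set yy : ℕ → ℝ := fun n => (sg n).S (ψs n) (ψs n) with hyydef
    have htoL2diff : ∀ n, toL2 (fr.ν n) (fun x => ψs n x - us n x)
        = toL2 (fr.ν n) (ψs n) - toL2 (fr.ν n) (us n) :=
      fun n => toL2_sub (hψsl2 n n) (husl2 n n)
    have hgendiff : ∀ n, (sg n).gen (toL2 (fr.ν n) (ψs n) - toL2 (fr.ν n) (us n))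
        = (sg n).gen (toL2 (fr.ν n) (ψs n)) - (sg n).gen (toL2 (fr.ν n) (us n)) :=
      fun n => (sg n).gen_sub (hψsD n) (husD n)
    have hqnorm : ∀ n, q n = ‖toL2 (fr.ν n) (ψs n) - toL2 (fr.ν n) (us n)‖^2 := by
      intro n
      show ip (fr.ν n) (fun x => ψs n x - us n x) (fun x => ψs n x - us n x) = _
      rw [ip_self_eq_norm_sq (memℒp_sub (hψsl2 n n) (husl2 n n)), htoL2diff n]
    have hqbd : ∀ n, |q n| ≤ (SC₁ + SK)^2 := by
      intro n
      rw [hqnorm n, abs_of_nonneg (sq_nonneg _)]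
      have h1 : ‖toL2 (fr.ν n) (ψs n) - toL2 (fr.ν n) (us n)‖ ≤ SC₁ + SK :=
        (norm_sub_le _ _).trans (add_le_add (hΨn n) (hUn n))
      nlinarith [norm_nonneg (toL2 (fr.ν n) (ψs n) - toL2 (fr.ν n) (us n))]
    have hpinner : ∀ n, p n = ⟪-((sg n).gen (toL2 (fr.ν n) (ψs n))
        - (sg n).gen (toL2 (fr.ν n) (us n))),
        toL2 (fr.ν n) (ψs n) - toL2 (fr.ν n) (us n)⟫ := by
      intro n
      show (sg n).S (fun x => ψs n x - us n x) (fun x => ψs n x - us n x) = _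
      rw [S_eq_inner (sg n) _ (memℒp_sub (hψsl2 n n) (husl2 n n)), htoL2diff n, hgendiff n]
    have hpbd : ∀ n, |p n| ≤ (SM1 + SM) * (SC₁ + SK) := by
      intro n
      rw [hpinner n]
      refine (abs_real_inner_le_norm _ _).trans ?_
      have h1 : ‖-((sg n).gen (toL2 (fr.ν n) (ψs n))
          - (sg n).gen (toL2 (fr.ν n) (us n)))‖ ≤ SM1 + SM := by
        rw [norm_neg]
        exact (norm_sub_le _ _).trans (add_le_add (hAΨn n) (hAUn n))
      have h2 : ‖toL2 (fr.ν n) (ψs n) - toL2 (fr.ν n) (us n)‖ ≤ SC₁ + SK :=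
        (norm_sub_le _ _).trans (add_le_add (hΨn n) (hUn n))
      exact mul_le_mul h1 h2 (norm_nonneg _) (by linarith)
    have hyyinner : ∀ n, yy n = ⟪-((sg n).gen (toL2 (fr.ν n) (ψs n))),
        toL2 (fr.ν n) (ψs n)⟫ := by
      intro n
      show (sg n).S (ψs n) (ψs n) = _
      rw [S_eq_inner (sg n) _ (hψsl2 n n)]
    have hyyabs : ∀ n, |yy n| ≤ SM1 * SC₁ := by
      intro n
      rw [hyyinner n]
      refine (abs_real_inner_le_norm _ _).trans ?_
      rw [norm_neg]
      exact mul_le_mul (hAΨn n) (hΨn n) (norm_nonneg _) hSM10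
    -- subsequence extraction
    obtain ⟨Yl, σ₁, hσ₁, hσ₁lim⟩ := exists_subseq_tendsto_of_abs_le
      (f := fun k => yy (σ₀ k)) (B := SM1 * SC₁) (fun k => hyyabs (σ₀ k))
    obtain ⟨Pl, σ₂, hσ₂, hσ₂lim⟩ := exists_subseq_tendsto_of_abs_le
      (f := fun k => p (σ₀ (σ₁ k))) (B := (SM1 + SM) * (SC₁ + SK))
      (fun k => hpbd (σ₀ (σ₁ k)))
    obtain ⟨Ql, σ₃, hσ₃, hσ₃lim⟩ := exists_subseq_tendsto_of_abs_le
      (f := fun k => q (σ₀ (σ₁ (σ₂ k)))) (B := (SC₁ + SK)^2)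
      (fun k => hqbd (σ₀ (σ₁ (σ₂ k))))
    set σ : ℕ → ℕ := fun k => σ₀ (σ₁ (σ₂ (σ₃ k))) with hσdef
    have hσmono : StrictMono σ := hσ₀.comp (hσ₁.comp (hσ₂.comp hσ₃))
    have hT : Tendsto (fun k => ⟪β • toL2 (fr.ν (σ k)) (us (σ k))
        - (sg (σ k)).gen (toL2 (fr.ν (σ k)) (us (σ k))), toL2 (fr.ν (σ k)) (us (σ k))⟫)
        atTop (𝓝 T) := hσ₀lim.comp ((hσ₁.comp (hσ₂.comp hσ₃)).tendsto_atTop)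
    have hYl : Tendsto (fun k => yy (σ k)) atTop (𝓝 Yl) :=
      hσ₁lim.comp ((hσ₂.comp hσ₃).tendsto_atTop)
    have hPl : Tendsto (fun k => p (σ k)) atTop (𝓝 Pl) := hσ₂lim.comp hσ₃.tendsto_atTop
    have hQl : Tendsto (fun k => q (σ k)) atTop (𝓝 Ql) := hσ₃lim
    have hYlle : Yl ≤ (sg 0).S (⇑R) (⇑R) :=
      sublimit_le_of_limsup_le hσmono hYl
        (fun n => le_trans (le_abs_self _) (hyyabs n)) hψslimsup
    have hCCσ : Tendsto (fun k => (sg (σ k)).Sb β (ψs (σ k)) (us (σ k))) atTop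
        (𝓝 ((sg 0).Sb β (⇑R) u)) := hCCg.comp hσmono.tendsto_atTop
    -- block-type limit for ψf
    have hBlψf : Tendsto (fun n => (sg n).Sb β (us n) (ψs n)) atTop
        (𝓝 ((sg 0).Sb β u (⇑R))) := by
      have e1 : ∀ n, (sg n).Sb β (us n) (ψs n)
          = ⟪β • toL2 (fr.ν n) (us n) - (sg n).gen (toL2 (fr.ν n) (us n)),
              toL2 (fr.ν n) ψ'⟫
            + ⟪β • toL2 (fr.ν n) (us n) - (sg n).gen (toL2 (fr.ν n) (us n)),
                toL2 (fr.ν n) (ψs n) - toL2 (fr.ν n) ψ'⟫ := by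
        intro n
        rw [Sb_eq_inner (sg n) (husl2 n n) (hψsl2 n n) β, ← inner_add_right, add_sub_cancel]
      have t1 : Tendsto (fun n => ⟪β • toL2 (fr.ν n) (us n)
          - (sg n).gen (toL2 (fr.ν n) (us n)), toL2 (fr.ν n) ψ'⟫) atTop
          (𝓝 ((sg 0).Sb β u (⇑R))) := by
        have h1 := hvw ψ' hψ'C
        rw [ufun_eq ψ' (hψ'l2 0)] at h1
        have h3 := h1.congr (fun n => vfun_eq n ψ' (hψ'l2 n))
        rw [Sb_eq_inner (sg 0) hul2 hψfl2 β, htoL2ψf]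
        rwa [htoL2ψ'] at h3
      have t2 : Tendsto (fun n => ⟪β • toL2 (fr.ν n) (us n)
          - (sg n).gen (toL2 (fr.ν n) (us n)),
          toL2 (fr.ν n) (ψs n) - toL2 (fr.ν n) ψ'⟫) atTop (𝓝 0) := by
        refine squeeze_zero_norm (fun n => ?_) (by simpa using hstrong.const_mul B)
        calc ‖⟪β • toL2 (fr.ν n) (us n) - (sg n).gen (toL2 (fr.ν n) (us n)),
            toL2 (fr.ν n) (ψs n) - toL2 (fr.ν n) ψ'⟫‖
            ≤ ‖β • toL2 (fr.ν n) (us n) - (sg n).gen (toL2 (fr.ν n) (us n))‖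
              * ‖toL2 (fr.ν n) (ψs n) - toL2 (fr.ν n) ψ'‖ := by
              rw [Real.norm_eq_abs]; exact abs_real_inner_le_norm _ _
        _ ≤ B * ‖toL2 (fr.ν n) (ψs n) - toL2 (fr.ν n) ψ'‖ :=
            mul_le_mul_of_nonneg_right (hVn n) (norm_nonneg _)
      have h4 := t1.add t2
      rw [add_zero] at h4
      exact h4.congr (fun n => (e1 n).symm)
    have hBlσ : Tendsto (fun k => (sg (σ k)).Sb β (us (σ k)) (ψs (σ k))) atTop
        (𝓝 ((sg 0).Sb β u (⇑R))) := hBlψf.comp hσmono.tendsto_atTop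
    have hxSb : ∀ n, (sg n).Sb β (us n) (us n)
        = ⟪β • toL2 (fr.ν n) (us n) - (sg n).gen (toL2 (fr.ν n) (us n)),
            toL2 (fr.ν n) (us n)⟫ :=
      fun n => Sb_eq_inner (sg n) (husl2 n n) (husl2 n n) β
    -- the five term identity
    have hSbdiff : ∀ n, β * q n + p n
        = (β * ip (fr.ν n) (ψs n) (ψs n) + yy n)
          - (sg n).Sb β (ψs n) (us n) - (sg n).Sb β (us n) (ψs n)
          + (sg n).Sb β (us n) (us n) := by
      intro n
      have hq' : q n = ⟪toL2 (fr.ν n) (ψs n) - toL2 (fr.ν n) (us n),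
          toL2 (fr.ν n) (ψs n) - toL2 (fr.ν n) (us n)⟫ := by
        show ip (fr.ν n) (fun x => ψs n x - us n x) (fun x => ψs n x - us n x) = _
        rw [ip_eq_inner (memℒp_sub (hψsl2 n n) (husl2 n n))
          (memℒp_sub (hψsl2 n n) (husl2 n n)), htoL2diff n]
      have hip' : ip (fr.ν n) (ψs n) (ψs n)
          = ⟪toL2 (fr.ν n) (ψs n), toL2 (fr.ν n) (ψs n)⟫ :=
        ip_eq_inner (hψsl2 n n) (hψsl2 n n)
      rw [hq', hpinner n, hyyinner n, hip', hxSb n,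
        Sb_eq_inner (sg n) (hψsl2 n n) (husl2 n n) β,
        Sb_eq_inner (sg n) (husl2 n n) (hψsl2 n n) β]
      simp only [inner_sub_left, inner_sub_right, real_inner_smul_left, inner_neg_left]
      ring
    have hlhs : Tendsto (fun k => β * q (σ k) + p (σ k)) atTop (𝓝 (β * Ql + Pl)) :=
      (hQl.const_mul β).add hPl
    have hnormσ : Tendsto (fun k => β * ip (fr.ν (σ k)) (ψs (σ k)) (ψs (σ k))) atTop
        (𝓝 (β * ‖R‖^2)) := by
      have h1 : Tendsto (fun n => ip (fr.ν n) (ψs n) (ψs n)) atTop (𝓝 (‖R‖^2)) := by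
        have h2 := hψsconv.2
        have h3 : ip (fr.ν 0) (⇑R) (⇑R) = ‖R‖^2 := by
          rw [ip_self_eq_norm_sq hψfl2, htoL2ψf]
        rwa [h3] at h2
      exact ((h1.const_mul β).comp hσmono.tendsto_atTop)
    have hrhs : Tendsto (fun k => (β * ip (fr.ν (σ k)) (ψs (σ k)) (ψs (σ k)) + yy (σ k))
        - (sg (σ k)).Sb β (ψs (σ k)) (us (σ k)) - (sg (σ k)).Sb β (us (σ k)) (ψs (σ k))
        + (sg (σ k)).Sb β (us (σ k)) (us (σ k))) atTop
        (𝓝 ((β * ‖R‖^2 + Yl) - (sg 0).Sb β (⇑R) u - (sg 0).Sb β u (⇑R) + T)) := by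
      refine (((hnormσ.add hYl).sub hCCσ).sub hBlσ).add ?_
      exact hT.congr (fun k => (hxSb (σ k)).symm)
    have hident : β * Ql + Pl
        = (β * ‖R‖^2 + Yl) - (sg 0).Sb β (⇑R) u - (sg 0).Sb β u (⇑R) + T :=
      tendsto_nhds_unique hlhs (hrhs.congr (fun k => (hSbdiff (σ k)).symm))
    -- full-sequence pairing limit for the difference sequence
    have hdiffpair : ∀ φC ∈ fr.C, Tendsto
        (fun n => ip (fr.ν n) (fun x => ψs n x - us n x) φC) atTop
        (𝓝 (ip (fr.ν 0) (fun x => (⇑R : E → ℝ) x - w x) φC)) := by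
      intro φC hφC
      have h1 : ∀ n, ip (fr.ν n) (fun x => ψs n x - us n x) φC
          = ip (fr.ν n) (ψs n) φC - ip (fr.ν n) (us n) φC :=
        fun n => ip_sub_left (hψsl2 n n) (husl2 n n) (hφC.1.2.1 n)
      have h2 : ip (fr.ν 0) (fun x => (⇑R : E → ℝ) x - w x) φC
          = ip (fr.ν 0) (⇑R) φC - ip (fr.ν 0) w φC :=
        ip_sub_left hψfl2 hwl2 (hφC.1.2.1 0)
      rw [h2]
      exact ((hψsconv.1 φC hφC).sub (hw φC hφC)).congr (fun n => (h1 n).symm)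
    -- lower semicontinuity of the form along σ
    have hlsc := (hpre.1 (fun x => (⇑R : E → ℝ) x - w x) (hψfmeas.sub hwmeas)
      (memℒp_sub hψfl2 hwl2) σ hσmono
      (fun k => (fun x => ψs (σ k) x - us (σ k) x))
      (fun k => ⟨fr.C_sub (hψsC (σ k)) (husC (σ k)), by
        show (sg (σ k)).memDom (toL2 (fr.ν (σ k)) (fun x => ψs (σ k) x - us (σ k) x))
        rw [htoL2diff (σ k)]
        exact (sg (σ k)).memDom_sub (hψsD (σ k)) (husD (σ k))⟩)
      (fun φC hφC => (hdiffpair φC hφC).comp hσmono.tendsto_atTop)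
      ⟨(SM1 + SM)^2, fun k => by
        rw [ip_Af_self (sg (σ k)) _]
        have h1 : ‖(sg (σ k)).gen (toL2 (fr.ν (σ k))
            (fun x => ψs (σ k) x - us (σ k) x))‖ ≤ SM1 + SM := by
          rw [htoL2diff (σ k), hgendiff (σ k)]
          exact (norm_sub_le _ _).trans (add_le_add (hAΨn (σ k)) (hAUn (σ k)))
        nlinarith [norm_nonneg ((sg (σ k)).gen (toL2 (fr.ν (σ k))
          (fun x => ψs (σ k) x - us (σ k) x)))]⟩).2
    have hlscPl : (sg 0).S (fun x => (⇑R : E → ℝ) x - w x)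
        (fun x => (⇑R : E → ℝ) x - w x) ≤ Pl :=
      hlsc.trans_eq (Filter.Tendsto.liminf_eq hPl)
    -- weak lower semicontinuity of the norm along σ
    have hQl0 : (0:ℝ) ≤ Ql :=
      ge_of_tendsto' hQl (fun k =>
        ip_self_nonneg (memℒp_sub (hψsl2 (σ k) (σ k)) (husl2 (σ k) (σ k))))
    have hpair0 : ∀ φ ∈ fr.F, |ip (fr.ν 0) (fun x => (⇑R : E → ℝ) x - w x) φ|
        ≤ Real.sqrt Ql * Real.sqrt (ip (fr.ν 0) φ φ) := by
      intro φ hφF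
      have hφC := fr.F_subset_C hφF
      have h2 : Tendsto (fun k =>
          |ip (fr.ν (σ k)) (fun x => ψs (σ k) x - us (σ k) x) φ|) atTop
          (𝓝 |ip (fr.ν 0) (fun x => (⇑R : E → ℝ) x - w x) φ|) :=
        ((hdiffpair φ hφC).comp hσmono.tendsto_atTop).abs
      have h3 : Tendsto (fun k => Real.sqrt (q (σ k))
          * Real.sqrt (ip (fr.ν (σ k)) φ φ)) atTop
          (𝓝 (Real.sqrt Ql * Real.sqrt (ip (fr.ν 0) φ φ))) :=
        (hQl.sqrt).mul (((fr.F_tendsto φ hφF).comp hσmono.tendsto_atTop).sqrt)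
      refine le_of_tendsto_of_tendsto' h2 h3 (fun k => ?_)
      exact abs_ip_le (memℒp_sub (hψsl2 (σ k) (σ k)) (husl2 (σ k) (σ k)))
        (fr.F_memL2 φ hφF (σ k))
    have hnormlsc : ip (fr.ν 0) (fun x => (⇑R : E → ℝ) x - w x)
        (fun x => (⇑R : E → ℝ) x - w x) ≤ Ql := by
      have h1 := fr.norm_le_of_pairing (hψfmeas.sub hwmeas) (memℒp_sub hψfl2 hwl2)
        (Real.sqrt_nonneg Ql) hpair0
      rwa [Real.sq_sqrt hQl0] at h1
    -- main inequality
    have hmain : β * ip (fr.ν 0) (fun x => (⇑R : E → ℝ) x - w x)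
          (fun x => (⇑R : E → ℝ) x - w x)
        + (sg 0).S (fun x => (⇑R : E → ℝ) x - w x) (fun x => (⇑R : E → ℝ) x - w x)
        ≤ (β * ‖R‖^2 + (sg 0).S (⇑R) (⇑R)) - (sg 0).Sb β (⇑R) u - (sg 0).Sb β u (⇑R)
          + T := by
      have h1 : β * ip (fr.ν 0) (fun x => (⇑R : E → ℝ) x - w x)
          (fun x => (⇑R : E → ℝ) x - w x) ≤ β * Ql :=
        mul_le_mul_of_nonneg_left hnormlsc hβ.le
      linarith [hident, hYlle, hlscPl, h1]
    -- translate to inner products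
    have eA : ip (fr.ν 0) (fun x => (⇑R : E → ℝ) x - w x)
        (fun x => (⇑R : E → ℝ) x - w x) = ⟪R - W, R - W⟫ := by
      rw [ip_eq_inner (memℒp_sub hψfl2 hwl2) (memℒp_sub hψfl2 hwl2),
        toL2_sub hψfl2 hwl2, htoL2ψf, ← hWdef]
    have eB : (sg 0).S (fun x => (⇑R : E → ℝ) x - w x) (fun x => (⇑R : E → ℝ) x - w x)
        = ⟪-((β • R - G) - (sg 0).gen W), R - W⟫ := by
      rw [S_eq_inner (sg 0) _ (memℒp_sub hψfl2 hwl2), toL2_sub hψfl2 hwl2, htoL2ψf,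
        ← hWdef, (sg 0).gen_sub hRdom hWdom, hgenR]
    have eC : (sg 0).Sb β (⇑R) u = ⟪G, Uu⟫ := by
      rw [Sb_eq_inner (sg 0) hψfl2 hul2 β, htoL2ψf, hgenR, ← hUudef]
      congr 1
      abel
    have eD : (sg 0).Sb β u (⇑R) = ⟪β • Uu - (sg 0).gen Uu, R⟫ := by
      rw [Sb_eq_inner (sg 0) hul2 hψfl2 β, htoL2ψf, ← hUudef]
    have eE : (sg 0).S (⇑R) (⇑R) = ⟪-(β • R - G), R⟫ := by
      rw [S_eq_inner (sg 0) _ hψfl2, htoL2ψf, hgenR]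
    rw [eA, eB, eC, eD, eE] at hmain
    have ex1 : ⟪R - W, R - W⟫ = ⟪R,R⟫ - ⟪R,W⟫ - ⟪W,R⟫ + ⟪W,W⟫ := by
      rw [inner_sub_left, inner_sub_right, inner_sub_right]
      ring
    have ex2 : ⟪-((β • R - G) - (sg 0).gen W), R - W⟫
        = -(β * ⟪R,R⟫) + β * ⟪R,W⟫ + ⟪G,R⟫ - ⟪G,W⟫ + ⟪(sg 0).gen W, R⟫
          - ⟪(sg 0).gen W, W⟫ := by
      rw [inner_neg_left, inner_sub_left, inner_sub_left, real_inner_smul_left,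
        inner_sub_right, inner_sub_right, inner_sub_right]
      ring
    have ex3 : ⟪-(β • R - G), R⟫ = -(β * ⟪R,R⟫) + ⟪G,R⟫ := by
      rw [inner_neg_left, inner_sub_left, real_inner_smul_left]
      ring
    have ex4 : ⟪β • Uu - (sg 0).gen Uu, R⟫ = β * ⟪Uu,R⟫ - ⟪(sg 0).gen Uu, R⟫ := by
      rw [inner_sub_left, real_inner_smul_left]
    have ex5 : ‖R‖^2 = ⟪R,R⟫ := (real_inner_self_eq_norm_sq R).symm
    rw [ex1, ex2, ex3, ex4, ex5] at hmain
    have egoal1 : ⟪G, eh⟫ = ⟪G, W⟫ - ⟪G, Uu⟫ := by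
      rw [hehdef, inner_sub_right]
    have egoal2 : ⟪hh, R⟫ = β * ⟪W, R⟫ - β * ⟪Uu, R⟫ - ⟪(sg 0).gen W, R⟫
        + ⟪(sg 0).gen Uu, R⟫ := by
      rw [hhhdef, hgeneh, hehdef, smul_sub, inner_sub_left, inner_sub_left,
        inner_sub_left, real_inner_smul_left, real_inner_smul_left]
      ring
    rw [hc₀def, egoal1, egoal2]
    have hcomm : ⟪R, W⟫ = ⟪W, R⟫ := real_inner_comm _ _
    linarith [hmain, hcomm]
  -- the pairing functional vanishes on C
  have hzero : ∀ g ∈ fr.C, ⟪toL2 (fr.ν 0) g, eh⟫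
      + ⟪hh, (sg 0).res β (toL2 (fr.ν 0) g)⟫ = 0 := by
    intro g hgC
    set L := ⟪toL2 (fr.ν 0) g, eh⟫ + ⟪hh, (sg 0).res β (toL2 (fr.ν 0) g)⟫ with hLdef
    by_contra hLne
    have hscale : ∀ t : ℝ, c₀ ≤ t * L := by
      intro t
      have h1 := key (fun x => t * g x) (fr.C_smul t hgC)
      rw [toL2_smul (hgC.1.2.1 0) t, (sg 0).res_smul (hcontr 0) hβ,
        real_inner_smul_left, real_inner_smul_right] at h1
      calc c₀ ≤ t * ⟪toL2 (fr.ν 0) g, eh⟫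
          + t * ⟪hh, (sg 0).res β (toL2 (fr.ν 0) g)⟫ := h1
      _ = t * L := by rw [hLdef]; ring
    have h2 := hscale ((c₀ - 1)/L)
    rw [div_mul_cancel₀ _ hLne] at h2
    linarith
  -- density: the functional vanishes at hh itself
  set Cβ := (∫ t in Set.Ioi (0:ℝ), Real.exp (-β*t)) with hCβdef
  have hCβ0 : 0 ≤ Cβ := setIntegral_nonneg measurableSet_Ioi (fun t _ => (Real.exp_pos _).le)
  have hhfmeas : Measurable (⇑hh) := (Lp.stronglyMeasurable hh).measurable
  have hhfl2 : MemLp (⇑hh) 2 (fr.ν 0) := Lp.memLp hh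
  have hΘh : ⟪hh, eh⟫ + ⟪hh, (sg 0).res β hh⟫ = 0 := by
    have happrox : ∀ ε : ℝ, 0 < ε →
        |⟪hh, eh⟫ + ⟪hh, (sg 0).res β hh⟫| ≤ ε * (‖eh‖ + ‖hh‖ * Cβ) := by
      intro ε hε
      obtain ⟨φ, hφF, hφclose⟩ := fr.F_dense (⇑hh) hhfmeas hhfl2 (ε^2) (by positivity)
      have hφC := fr.F_subset_C hφF
      have hφl2 := fr.F_memL2 φ hφF 0
      have hΦzero := hzero φ hφC
      have hdiff : ‖hh - toL2 (fr.ν 0) φ‖ ≤ ε := by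
        have e1 : ip (fr.ν 0) (fun x => hh x - φ x) (fun x => hh x - φ x)
            = ‖hh - toL2 (fr.ν 0) φ‖^2 := by
          rw [ip_self_eq_norm_sq (memℒp_sub hhfl2 hφl2), toL2_sub hhfl2 hφl2, toL2_coeFn]
        have h2 : ‖hh - toL2 (fr.ν 0) φ‖^2 ≤ ε^2 := by rw [← e1]; exact hφclose.le
        have h3 := Real.sqrt_le_sqrt h2
        rwa [Real.sqrt_sq (norm_nonneg _), Real.sqrt_sq hε.le] at h3
      have hsplit : (sg 0).res β (hh - toL2 (fr.ν 0) φ)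
          = (sg 0).res β hh - (sg 0).res β (toL2 (fr.ν 0) φ) :=
        (sg 0).res_sub (hcontr 0) hβ _ _
      have h4 : ⟪hh - toL2 (fr.ν 0) φ, eh⟫ = ⟪hh, eh⟫ - ⟪toL2 (fr.ν 0) φ, eh⟫ :=
        inner_sub_left _ _ _
      have h5 : ⟪hh, (sg 0).res β (hh - toL2 (fr.ν 0) φ)⟫
          = ⟪hh, (sg 0).res β hh⟫ - ⟪hh, (sg 0).res β (toL2 (fr.ν 0) φ)⟫ := by
        rw [hsplit]
        exact inner_sub_right _ _ _
      have e2 : ⟪hh, eh⟫ + ⟪hh, (sg 0).res β hh⟫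
          = ⟪hh - toL2 (fr.ν 0) φ, eh⟫
            + ⟪hh, (sg 0).res β (hh - toL2 (fr.ν 0) φ)⟫ := by
        rw [h4, h5]
        linarith [hΦzero]
      rw [e2]
      have b1 : |⟪hh - toL2 (fr.ν 0) φ, eh⟫| ≤ ε * ‖eh‖ := by
        refine (abs_real_inner_le_norm _ _).trans ?_
        exact mul_le_mul_of_nonneg_right hdiff (norm_nonneg _)
      have b2 : |⟪hh, (sg 0).res β (hh - toL2 (fr.ν 0) φ)⟫| ≤ ‖hh‖ * (Cβ * ε) := by
        refine (abs_real_inner_le_norm _ _).trans ?_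
        refine mul_le_mul_of_nonneg_left ?_ (norm_nonneg _)
        refine ((sg 0).norm_res_le (hcontr 0) hβ _).trans ?_
        exact mul_le_mul_of_nonneg_left hdiff hCβ0
      calc |⟪hh - toL2 (fr.ν 0) φ, eh⟫ + ⟪hh, (sg 0).res β (hh - toL2 (fr.ν 0) φ)⟫|
          ≤ |⟪hh - toL2 (fr.ν 0) φ, eh⟫|
            + |⟪hh, (sg 0).res β (hh - toL2 (fr.ν 0) φ)⟫| := abs_add_le _ _
      _ ≤ ε * ‖eh‖ + ‖hh‖ * (Cβ * ε) := add_le_add b1 b2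
      _ = ε * (‖eh‖ + ‖hh‖ * Cβ) := by ring
    by_contra hne
    have habs : 0 < |⟪hh, eh⟫ + ⟪hh, (sg 0).res β hh⟫| := abs_pos.2 hne
    have hD0 : (0:ℝ) ≤ ‖eh‖ + ‖hh‖ * Cβ := by positivity
    have hpos2 : (0:ℝ) < 2 * (‖eh‖ + ‖hh‖ * Cβ) + 2 := by linarith
    have hεpos : 0 < |⟪hh, eh⟫ + ⟪hh, (sg 0).res β hh⟫|
        / (2 * (‖eh‖ + ‖hh‖ * Cβ) + 2) := div_pos habs hpos2
    have h1 := happrox _ hεpos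
    rw [div_mul_eq_mul_div, le_div_iff₀ hpos2] at h1
    nlinarith [mul_pos habs (show (0:ℝ) < (‖eh‖ + ‖hh‖ * Cβ) + 2 by linarith)]
  have hres_hh : (sg 0).res β hh = eh := by
    rw [hhhdef]
    exact (sg 0).res_beta_sub_gen (hcontr 0) hβ hehdom
  rw [hres_hh] at hΘh
  have hinner : ⟪hh, eh⟫ = 0 := by linarith
  have hdiss := (sg 0).inner_gen_self_nonpos (hcontr 0) hehdom
  have hexpand : ⟪hh, eh⟫ = β * ⟪eh, eh⟫ - ⟪(sg 0).gen eh, eh⟫ := by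
    rw [hhhdef, inner_sub_left, real_inner_smul_left]
  have heh0 : eh = 0 := by
    have h1 : (0:ℝ) ≤ ⟪eh, eh⟫ := real_inner_self_nonneg
    have h2 : ⟪eh, eh⟫ = 0 := by nlinarith
    exact inner_self_eq_zero.1 h2
  have hWU : W = Uu := by rwa [hehdef, sub_eq_zero] at heh0
  have hae_wu : w =ᵐ[fr.ν 0] u := by
    have h1 : MemLp.toLp w hwl2 = MemLp.toLp u hul2 := by
      have := hWU
      rwa [hWdef, hUudef, toL2_eq hwl2, toL2_eq hul2] at this
    calc w =ᵐ[fr.ν 0] ⇑(MemLp.toLp w hwl2) := hwl2.coeFn_toLp.symm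
    _ = ⇑(MemLp.toLp u hul2) := by rw [h1]
    _ =ᵐ[fr.ν 0] u := hul2.coeFn_toLp
  intro g hgC
  have hfin := hw g hgC
  rwa [ip_congr_left hae_wu] at hfin

end Mosco
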